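/- arXiv:1601.00084 — 6 statements merged into one kernel-verified Lean document; each statement's English description precedes it below -/
import Mathlib

section
/- Let f : 𝕋ⁿ → ℂ be continuous with Fourier coefficients f_k, and let f̃_k be its discrete Fourier transform coefficients on the regular grid of size N = (N₁,...,Nₙ), i.e. f̃_k = (1/(N₁⋯Nₙ)) Σ_{0≤j<N} f(θ_j) e^{-2πi k·θ_j} with θ_j = (j₁/N₁,...,jₙ/Nₙ). Assuming the Fourier series of f converges absolutely, then f̃_k = Σ_{m∈ℤⁿ} f_{k + N(m)}, where N(m) = (N₁m₁,...,Nₙmₙ) (aliasing formula). -/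
open scoped BigOperators

lemma geom_exp_sum (M : ℕ) (hM : 0 < M) (d : ℤ) :
    ∑ j : Fin M, Complex.exp (2 * (Real.pi : ℂ) * Complex.I * d * j / M) =
      if (M : ℤ) ∣ d then (M : ℂ) else 0 := by
  have hM0 : (M : ℂ) ≠ 0 := Nat.cast_ne_zero.mpr hM.ne'
  set x : ℂ := Complex.exp (2 * (Real.pi : ℂ) * Complex.I * d / M) with hx
  have hpow : ∀ j : ℕ, Complex.exp (2 * (Real.pi : ℂ) * Complex.I * d * j / M) = x ^ j := by
    intro j
    rw [hx, ← Complex.exp_nat_mul]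
    congr 1
    field_simp
  have hsum : ∑ j : Fin M, Complex.exp (2 * (Real.pi : ℂ) * Complex.I * d * j / M)
      = ∑ j ∈ Finset.range M, x ^ j := by
    rw [← Fin.sum_univ_eq_sum_range (fun j : ℕ => x ^ j) M]
    exact Finset.sum_congr rfl fun j _ => hpow j
  rw [hsum]
  by_cases hdvd : (M : ℤ) ∣ d
  · obtain ⟨c, hc⟩ := hdvd
    have hx1 : x = 1 := by
      rw [hx, hc]
      have : 2 * (Real.pi : ℂ) * Complex.I * ((M : ℤ) * c : ℤ) / M = (c : ℂ) * (2 * Real.pi * Complex.I) := by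
        push_cast
        field_simp
      rw [this, Complex.exp_int_mul_two_pi_mul_I]
    simp [hx1, hc, dvd_mul_right]
  · have hx1 : x ≠ 1 := by
      intro h
      rw [hx, Complex.exp_eq_one_iff] at h
      obtain ⟨m, hm⟩ := h
      apply hdvd
      have h2 : (2 * (Real.pi : ℂ) * Complex.I) ≠ 0 := by
        simp [Real.pi_ne_zero, Complex.I_ne_zero, Complex.ofReal_ne_zero]
      have hdc : (d : ℂ) = (m : ℂ) * (M : ℂ) := by
        field_simp at hm
        have h4 : 2 * (Real.pi:ℂ) * Complex.I * (d:ℂ) = 2 * (Real.pi:ℂ) * Complex.I * ((m:ℂ) * (M:ℂ)) := by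
          linear_combination (2 * (Real.pi:ℂ) * Complex.I) * hm
        exact mul_left_cancel₀ h2 h4
      have h3 : d = m * M := by exact_mod_cast hdc
      exact ⟨m, by linarith⟩
    have hxM : x ^ M = 1 := by
      rw [hx, ← Complex.exp_nat_mul]
      have : (M : ℂ) * (2 * (Real.pi : ℂ) * Complex.I * d / M) = (d : ℂ) * (2 * Real.pi * Complex.I) := by
        field_simp
      rw [this, Complex.exp_int_mul_two_pi_mul_I]
    rw [geom_sum_eq hx1, hxM]
    simp [hdvd]

/-- Aliasing formula: the discrete Fourier transform coefficients of `f` on the regular grid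
of size `N = (N₁,…,Nₙ)` are obtained from the true Fourier coefficients by
`f̃_k = ∑_{m∈ℤⁿ} f_{k+N(m)}`. -/
theorem dft_aliasing
    (n : ℕ) (N : Fin n → ℕ) (hN : ∀ i, 0 < N i)
    (f : (Fin n → ℝ) → ℂ) (hf : Continuous f)
    (fhat : (Fin n → ℤ) → ℂ)
    (habs : Summable fun k : Fin n → ℤ => ‖fhat k‖)
    (hexp : ∀ θ : Fin n → ℝ, HasSum
      (fun k : Fin n → ℤ =>
        fhat k * Complex.exp (2 * (Real.pi : ℂ) * Complex.I * ∑ i, (k i : ℂ) * (θ i : ℂ)))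
      (f θ))
    (k : Fin n → ℤ) :
    HasSum (fun m : Fin n → ℤ => fhat fun i => k i + (N i : ℤ) * m i)
      ((1 / ∏ i, (N i : ℂ)) * ∑ j : (i : Fin n) → Fin (N i),
        f (fun i => ((j i : ℕ) : ℝ) / (N i : ℝ)) *
          Complex.exp (-(2 * (Real.pi : ℂ) * Complex.I) *
            ∑ i, (k i : ℂ) * ((j i : ℕ) : ℂ) / (N i : ℂ))) := by
  have hN0 : ∀ i, ((N i : ℂ)) ≠ 0 := fun i => Nat.cast_ne_zero.mpr (hN i).ne'
  have hNZ : ∀ i, ((N i : ℤ)) ≠ 0 := fun i => Int.natCast_ne_zero.mpr (hN i).ne'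
  set P : ℂ := ∏ i, (N i : ℂ) with hP
  have hP0 : P ≠ 0 := Finset.prod_ne_zero_iff.mpr fun i _ => hN0 i
  -- weights and grid points
  set W : ((i : Fin n) → Fin (N i)) → ℂ := fun j =>
    Complex.exp (-(2 * (Real.pi : ℂ) * Complex.I) * ∑ i, (k i : ℂ) * ((j i : ℕ) : ℂ) / (N i : ℂ)) with hW
  set θ : ((i : Fin n) → Fin (N i)) → (Fin n → ℝ) := fun j i => ((j i : ℕ) : ℝ) / (N i : ℝ) with hθ
  set T : ℂ := ∑ j : (i : Fin n) → Fin (N i), f (θ j) * W j with hT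
  -- per-grid-point Fourier series, multiplied by the weight
  have h1 : ∀ j : (i : Fin n) → Fin (N i), HasSum
      (fun l : Fin n → ℤ =>
        fhat l * Complex.exp (2 * (Real.pi : ℂ) * Complex.I * ∑ i, (l i : ℂ) * ((θ j i : ℝ) : ℂ)) * W j)
      (f (θ j) * W j) := fun j => (hexp (θ j)).mul_right _
  have h2 : HasSum
      (fun l : Fin n → ℤ => ∑ j : (i : Fin n) → Fin (N i),
        fhat l * Complex.exp (2 * (Real.pi : ℂ) * Complex.I * ∑ i, (l i : ℂ) * ((θ j i : ℝ) : ℂ)) * W j)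
      T := hasSum_sum fun j _ => h1 j
  -- evaluate the inner finite sum
  have key : ∀ l : Fin n → ℤ,
      (∑ j : (i : Fin n) → Fin (N i),
        fhat l * Complex.exp (2 * (Real.pi : ℂ) * Complex.I * ∑ i, (l i : ℂ) * ((θ j i : ℝ) : ℂ)) * W j)
      = fhat l * ∏ i, (if (N i : ℤ) ∣ (l i - k i) then (N i : ℂ) else 0) := by
    intro l
    have step1 : ∀ j : (i : Fin n) → Fin (N i),
        fhat l * Complex.exp (2 * (Real.pi : ℂ) * Complex.I * ∑ i, (l i : ℂ) * ((θ j i : ℝ) : ℂ)) * W j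
        = fhat l * ∏ i, Complex.exp (2 * (Real.pi : ℂ) * Complex.I * ((l i - k i : ℤ) : ℂ) * ((j i : ℕ) : ℂ) / (N i : ℂ)) := by
      intro j
      rw [hW, mul_assoc, ← Complex.exp_add, ← Complex.exp_sum]
      congr 2
      rw [Finset.mul_sum, Finset.mul_sum, ← Finset.sum_add_distrib]
      refine Finset.sum_congr rfl fun i _ => ?_
      rw [hθ]
      push_cast
      ring
    rw [Finset.sum_congr rfl fun j _ => step1 j, ← Finset.mul_sum]
    congr 1
    have hgeom : ∀ i : Fin n, (if (N i : ℤ) ∣ (l i - k i) then (N i : ℂ) else 0)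
        = ∑ ji : Fin (N i), Complex.exp (2 * (Real.pi : ℂ) * Complex.I * ((l i - k i : ℤ) : ℂ) * ji / (N i : ℂ)) :=
      fun i => (geom_exp_sum (N i) (hN i) (l i - k i)).symm
    rw [Finset.prod_congr rfl fun i _ => hgeom i, Finset.prod_univ_sum, Fintype.piFinset_univ]
  have h3 : HasSum
      (fun l : Fin n → ℤ => fhat l * ∏ i, (if (N i : ℤ) ∣ (l i - k i) then (N i : ℂ) else 0)) T := by
    rw [show (fun l : Fin n → ℤ => fhat l * ∏ i, (if (N i : ℤ) ∣ (l i - k i) then (N i : ℂ) else 0))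
        = (fun l : Fin n → ℤ => ∑ j : (i : Fin n) → Fin (N i),
            fhat l * Complex.exp (2 * (Real.pi : ℂ) * Complex.I * ∑ i, (l i : ℂ) * ((θ j i : ℝ) : ℂ)) * W j)
      from funext fun l => (key l).symm]
    exact h2
  have h4 := h3.mul_left (1 / P)
  -- simplify the summand to an indicator
  set g : (Fin n → ℤ) → ℂ := fun l =>
    if ∀ i, (N i : ℤ) ∣ (l i - k i) then fhat l else 0 with hg
  have h5 : (fun l : Fin n → ℤ =>
      (1 / P) * (fhat l * ∏ i, (if (N i : ℤ) ∣ (l i - k i) then (N i : ℂ) else 0))) = g := by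
    funext l
    simp only [hg]
    by_cases hall : ∀ i, (N i : ℤ) ∣ (l i - k i)
    · rw [if_pos hall]
      have : (∏ i, (if (N i : ℤ) ∣ (l i - k i) then (N i : ℂ) else 0)) = P := by
        rw [hP]; exact Finset.prod_congr rfl fun i _ => if_pos (hall i)
      rw [this]
      field_simp
    · rw [if_neg hall]
      push_neg at hall
      obtain ⟨i, hi⟩ := hall
      rw [Finset.prod_eq_zero (Finset.mem_univ i)
        (show (if (N i : ℤ) ∣ l i - k i then (N i : ℂ) else 0) = 0 from if_neg hi)]
      ring
  rw [h5] at h4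
  -- pull back along the injection m ↦ k + N * m
  set e : (Fin n → ℤ) → (Fin n → ℤ) := fun m i => k i + (N i : ℤ) * m i with he
  have hinj : Function.Injective e := by
    intro a b hab
    funext i
    have := congrFun hab i
    rw [he] at this
    simp only [add_right_inj] at this
    exact mul_left_cancel₀ (hNZ i) this
  have hvanish : ∀ l : Fin n → ℤ, l ∉ Set.range e → g l = 0 := by
    intro l hl
    simp only [hg]
    rw [if_neg]
    intro hall
    apply hl
    refine ⟨fun i => (l i - k i) / (N i : ℤ), ?_⟩
    funext i
    rw [he]
    simp only []
    rw [Int.mul_ediv_cancel' (hall i)]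
    ring
  have h6 : HasSum (g ∘ e) ((1 / P) * T) := (hinj.hasSum_iff hvanish).mpr h4
  have h7 : (g ∘ e) = (fun m : Fin n → ℤ => fhat fun i => k i + (N i : ℤ) * m i) := by
    funext m
    simp only [Function.comp_apply, hg, he]
    rw [if_pos]
    intro i
    simp only [add_sub_cancel_left]
    exact Dvd.intro (m i) rfl
  rw [h7] at h6
  exact h6
end

section
/- Let f : 𝕋_ρ̂ → ℂ (n=1) be analytic and bounded on the complex strip of width ρ̂ > 0, with sup norm ‖f‖_ρ̂. Let f̃_k be the discrete Fourier transform coefficients on the regular grid of N points. Then for each integer k with -N/2 ≤ k < N/2, |f̃_k - f_k| ≤ (e^{-2πρ̂N}/(1 - e^{-2πρ̂N})) (e^{2πρ̂k} + e^{-2πρ̂k}) ‖f‖_ρ̂. -/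
open scoped BigOperators

open Complex Real Set MeasureTheory intervalIntegral

noncomputable section

lemma my_strip_open (ρ' : ℝ) : IsOpen {z : ℂ | |z.im| < ρ'} := by
  have : {z : ℂ | |z.im| < ρ'} = Complex.im ⁻¹' (Ioo (-ρ') ρ') := by
    ext z; simp [abs_lt]
  rw [this]; exact isOpen_Ioo.preimage Complex.continuous_im

lemma my_decay (ρ' : ℝ) (hρ : 0 < ρ') (f : ℂ → ℂ)
    (hdiff : DifferentiableOn ℂ f {z : ℂ | |z.im| < ρ'})
    (hcont : ContinuousOn f {z : ℂ | |z.im| ≤ ρ'})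
    (hper : ∀ z : ℂ, f (z + 1) = f z)
    (M : ℝ) (hM : ∀ z : ℂ, |z.im| ≤ ρ' → ‖f z‖ ≤ M) (j : ℤ) :
    ‖∫ t in (0:ℝ)..1, f (t : ℂ) *
        Complex.exp (-(2 * (Real.pi : ℂ) * Complex.I) * (j : ℂ) * (t : ℂ))‖
      ≤ Real.exp (-(2 * Real.pi * ρ' * |(j : ℝ)|)) * M := by
  have hM0 : 0 ≤ M := le_trans (norm_nonneg _) (hM 0 (by simp [hρ.le]))
  set σ : ℝ := if 0 ≤ j then -ρ' else ρ' with hσ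
  have hσabs : |σ| = ρ' := by
    rw [hσ]; split <;> simp [abs_of_pos hρ]
  have hjσ : (j : ℝ) * σ = -(|(j:ℝ)| * ρ') := by
    rcases le_or_gt 0 (j:ℝ)  with h | h
    · rw [_root_.abs_of_nonneg h, hσ, if_pos (by exact_mod_cast h)]; ring
    · rw [_root_.abs_of_neg h, hσ, if_neg (by exact_mod_cast not_le.2 h)]; ring
  set g : ℂ → ℂ := fun z => f z * Complex.exp (-(2 * (Real.pi : ℂ) * Complex.I) * (j : ℂ) * z)
    with hg
  have hgper : ∀ z : ℂ, g (z + 1) = g z := by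
    intro z
    simp only [hg, hper]
    congr 1
    rw [mul_add, Complex.exp_add, mul_one]
    rw [show -(2 * (Real.pi : ℂ) * Complex.I) * (j:ℂ) = (-j : ℤ) * (2 * Real.pi * Complex.I)
      by push_cast; ring, Complex.exp_int_mul_two_pi_mul_I, mul_one]
  have hgcont : ContinuousOn g {z : ℂ | |z.im| ≤ ρ'} :=
    hcont.mul (Complex.continuous_exp.comp (by continuity)).continuousOn
  have key : (∫ t in (0:ℝ)..1, g t) = ∫ t in (0:ℝ)..1, g (t + σ * Complex.I) := by
    have := Complex.integral_boundary_rect_eq_zero_of_differentiable_on_off_countable g 0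
      (1 + σ * Complex.I) ∅ Set.countable_empty ?_ ?_
    · have hvert : (∫ y in (0:ℝ)..σ, g (1 + y * Complex.I))
          = ∫ y in (0:ℝ)..σ, g (0 + y * Complex.I) := by
        refine intervalIntegral.integral_congr fun y _ => ?_
        rw [show (1 : ℂ) + y * Complex.I = (0 + y * Complex.I) + 1 by ring, hgper]
      simp only [Complex.zero_re, Complex.zero_im, Complex.add_re, Complex.one_re,
        Complex.mul_re, Complex.ofReal_re, Complex.I_re, Complex.ofReal_im, Complex.I_im,
        Complex.add_im, Complex.one_im, Complex.mul_im] at this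
      norm_num at this
      rw [hvert] at this
      simp only [zero_add] at this
      linear_combination this
    · refine hgcont.mono fun z hz => ?_
      rw [Complex.mem_reProdIm] at hz
      obtain ⟨-, h2⟩ := hz
      simp only [Complex.add_im, Complex.one_im, Complex.mul_im, Complex.ofReal_re,
        Complex.I_im, Complex.ofReal_im, Complex.I_re, Complex.zero_im] at h2
      norm_num at h2
      rcases mem_uIcc.mp h2 with h | h
      · simp only [Set.mem_setOf_eq]
        rw [abs_le]
        constructor
        · nlinarith [neg_abs_le σ, hσabs]
        · nlinarith [le_abs_self σ, hσabs]
      · simp only [Set.mem_setOf_eq]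
        rw [abs_le]
        constructor
        · nlinarith [neg_abs_le σ, hσabs]
        · nlinarith [le_abs_self σ, hσabs]
    · rintro z ⟨hz, -⟩
      rw [Complex.mem_reProdIm] at hz
      obtain ⟨-, h2⟩ := hz
      simp only [Complex.add_im, Complex.one_im, Complex.mul_im, Complex.ofReal_re,
        Complex.I_im, Complex.ofReal_im, Complex.I_re, Complex.zero_im] at h2
      norm_num at h2
      have hσcases : σ = -ρ' ∨ σ = ρ' := by rw [hσ]; split <;> simp
      have hmem : z ∈ {z : ℂ | |z.im| < ρ'} := by
        simp only [Set.mem_setOf_eq, abs_lt]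
        constructor
        · rcases hσcases with hc | hc <;> rcases h2.1 with h | h <;> linarith
        · rcases hσcases with hc | hc <;> rcases h2.2 with h | h <;> linarith
      have hf : DifferentiableAt ℂ f z :=
        hdiff.differentiableAt ((my_strip_open ρ').mem_nhds hmem)
      exact hf.mul ((Complex.differentiable_exp.comp
        ((differentiable_id.const_mul _))).differentiableAt)
  rw [key]
  have hb : ∀ t ∈ Set.uIoc (0:ℝ) 1, ‖g (t + σ * Complex.I)‖
      ≤ Real.exp (-(2 * Real.pi * ρ' * |(j : ℝ)|)) * M := by
    intro t _
    rw [hg]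
    simp only [norm_mul, Complex.norm_exp]
    have hre : (-(2 * (Real.pi : ℂ) * Complex.I) * (j : ℂ) * ((t:ℂ) + σ * Complex.I)).re
        = 2 * Real.pi * ((j:ℝ) * σ) := by
      simp [Complex.mul_re, Complex.mul_im, Complex.add_re, Complex.add_im]
      ring
    rw [hre, hjσ]
    have him : ((t:ℂ) + σ * Complex.I).im = σ := by simp
    have h1 : ‖f ((t:ℂ) + σ * Complex.I)‖ ≤ M := hM _ (by rw [him, hσabs])
    have h2 : Real.exp (2 * Real.pi * -(|(j:ℝ)| * ρ')) = Real.exp (-(2 * Real.pi * ρ' * |(j:ℝ)|)) := by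
      ring_nf
    rw [h2]
    exact mul_le_mul h1 le_rfl (Real.exp_pos _).le hM0 |>.trans (by rw [mul_comm])
  calc ‖∫ t in (0:ℝ)..1, g (t + σ * Complex.I)‖
      ≤ Real.exp (-(2 * Real.pi * ρ' * |(j : ℝ)|)) * M * |1 - 0| :=
        intervalIntegral.norm_integral_le_of_norm_le_const hb
    _ = _ := by norm_num

lemma my_rou (N : ℕ) (hN : 0 < N) (d : ℤ) :
    (∑ j : Fin N, Complex.exp (2 * (Real.pi:ℂ) * Complex.I * d * j / N))
      = if (N:ℤ) ∣ d then (N:ℂ) else 0 := by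
  have hNne : (N:ℂ) ≠ 0 := Nat.cast_ne_zero.mpr hN.ne'
  set ζ : ℂ := Complex.exp (2 * (Real.pi:ℂ) * Complex.I * d / N) with hζ
  have hz : ∀ j : ℕ, Complex.exp (2 * (Real.pi:ℂ) * Complex.I * d * j / N) = ζ ^ j := by
    intro j
    rw [hζ, ← Complex.exp_nat_mul]
    congr 1
    field_simp
  have hsum : (∑ j : Fin N, Complex.exp (2 * (Real.pi:ℂ) * Complex.I * d * j / N))
      = ∑ j ∈ Finset.range N, ζ ^ j := by
    rw [← Fin.sum_univ_eq_sum_range]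
    exact Finset.sum_congr rfl fun j _ => hz j
  rw [hsum]
  have hζN : ζ ^ N = 1 := by
    rw [hζ, ← Complex.exp_nat_mul, Complex.exp_eq_one_iff]
    refine ⟨d, ?_⟩
    field_simp
  by_cases hdvd : (N:ℤ) ∣ d
  · obtain ⟨m, rfl⟩ := hdvd
    have : ζ = 1 := by
      rw [hζ, show 2 * (Real.pi:ℂ) * Complex.I * ((N:ℤ) * m : ℤ) / N
          = (m : ℤ) * (2 * Real.pi * Complex.I) by push_cast; field_simp]
      exact Complex.exp_int_mul_two_pi_mul_I m
    rw [if_pos (dvd_mul_right (N:ℤ) m)]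
    simp [this]
  · have hζne : ζ ≠ 1 := by
      intro h
      rw [hζ, Complex.exp_eq_one_iff] at h
      obtain ⟨m, hm⟩ := h
      apply hdvd
      refine ⟨m, ?_⟩
      have h2 : (2 * (Real.pi:ℂ) * Complex.I) ≠ 0 := by
        simp [Real.pi_ne_zero, Complex.I_ne_zero]
      have : (d : ℂ) = (N : ℂ) * m := by
        field_simp at hm
        apply mul_left_cancel₀ h2
        linear_combination (2 * (Real.pi:ℂ) * Complex.I) * hm
      exact_mod_cast this
    rw [geom_sum_eq hζne, hζN]
    simp [hdvd]

lemma my_natAbs_cast (n : ℤ) : ((n.natAbs : ℕ) : ℝ) = |(n : ℝ)| := by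
  rw [Nat.cast_natAbs, Int.cast_abs]

lemma my_geom (r A B : ℝ) (hr0 : 0 ≤ r) (hr1 : r < 1) :
    HasSum (fun l : ℤ => if l = 0 then 0 else (if 0 < l then A else B) * r ^ l.natAbs)
      (r / (1 - r) * (A + B)) := by
  set b : ℤ → ℝ := fun l => if l = 0 then 0 else (if 0 < l then A else B) * r ^ l.natAbs with hb
  have hpos : HasSum (fun n : ℕ => b n) (A * (r * (1 - r)⁻¹)) := by
    have hgeo : HasSum (fun n : ℕ => A * (r * r ^ n)) (A * (r * (1 - r)⁻¹)) :=
      ((hasSum_geometric_of_lt_one hr0 hr1).mul_left r).mul_left A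
    have h1 : HasSum (fun n : ℕ => b ((n : ℤ) + 1)) (A * (r * (1 - r)⁻¹)) := by
      refine hgeo.congr_fun fun n => ?_
      rw [hb]
      simp only []
      rw [if_neg (by omega), if_pos (by omega)]
      rw [show ((n:ℤ) + 1).natAbs = n + 1 by omega, pow_succ']
    have := (hasSum_nat_add_iff (f := fun n : ℕ => b n) 1).mp
      (h1.congr_fun fun n => by push_cast; ring_nf)
    simpa [hb] using this
  have hneg : HasSum (fun n : ℕ => b (-((n : ℤ) + 1))) (B * (r * (1 - r)⁻¹)) := by
    have hgeo : HasSum (fun n : ℕ => B * (r * r ^ n)) (B * (r * (1 - r)⁻¹)) :=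
      ((hasSum_geometric_of_lt_one hr0 hr1).mul_left r).mul_left B
    refine hgeo.congr_fun fun n => ?_
    rw [hb]
    simp only []
    rw [if_neg (by omega), if_neg (by omega)]
    rw [show (-((n:ℤ) + 1)).natAbs = n + 1 by omega, pow_succ']
  have := hpos.of_nat_of_neg_add_one hneg
  convert this using 1
  rw [div_eq_mul_inv]
  ring

end

/-- DFT coefficient error bound for a bounded analytic function on a 1-dimensional strip:
for `-N/2 ≤ k < N/2`,
`|f̃_k − f_k| ≤ (e^{-2πρ̂N}/(1−e^{-2πρ̂N})) (e^{2πρ̂k} + e^{-2πρ̂k}) ‖f‖_ρ̂`. -/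
theorem dft_coefficient_error_bound_dim_one
    (ρ' : ℝ) (hρ : 0 < ρ') (f : ℂ → ℂ)
    (hdiff : DifferentiableOn ℂ f {z : ℂ | |z.im| < ρ'})
    (hcont : ContinuousOn f {z : ℂ | |z.im| ≤ ρ'})
    (hper : ∀ z : ℂ, f (z + 1) = f z)
    (M : ℝ) (hM : ∀ z : ℂ, |z.im| ≤ ρ' → ‖f z‖ ≤ M)
    (N : ℕ) (hN : 0 < N) (k : ℤ) (hk1 : -(N : ℤ) ≤ 2 * k) (hk2 : 2 * k < (N : ℤ)) :
    ‖(1 / (N : ℂ)) * ∑ j : Fin N, f (((j : ℕ) : ℂ) / (N : ℂ)) *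
        Complex.exp (-(2 * (Real.pi : ℂ) * Complex.I) * (k : ℂ) * ((j : ℕ) : ℂ) / (N : ℂ))
      - ∫ t in (0:ℝ)..1, f (t : ℂ) *
          Complex.exp (-(2 * (Real.pi : ℂ) * Complex.I) * (k : ℂ) * (t : ℂ))‖
    ≤ Real.exp (-(2 * Real.pi * ρ' * N)) / (1 - Real.exp (-(2 * Real.pi * ρ' * N))) *
        (Real.exp (2 * Real.pi * ρ' * k) + Real.exp (-(2 * Real.pi * ρ' * k))) * M := by
  classical
  have hM0 : 0 ≤ M := le_trans (norm_nonneg _) (hM 0 (by simp [hρ.le]))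
  have hNR : (0:ℝ) < N := by exact_mod_cast hN
  have hNC : (N:ℂ) ≠ 0 := Nat.cast_ne_zero.mpr hN.ne'
  haveI : Fact (0 < (1:ℝ)) := ⟨one_pos⟩
  set g : ℝ → ℂ := fun t => f t with hgdef
  have hgcont : Continuous g := by
    refine hcont.comp_continuous Complex.continuous_ofReal fun x => ?_
    simp [hρ.le]
  have hgper : ∀ x : ℝ, g (x + 1) = g x := by
    intro x
    rw [hgdef]
    simp only []
    push_cast
    exact hper x
  set F : C(AddCircle (1:ℝ), ℂ) := ⟨AddCircle.liftIco 1 0 g,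
    AddCircle.liftIco_zero_continuous (by rw [← hgper 0]; norm_num) hgcont.continuousOn⟩
    with hF
  have hFcoe : ∀ x : ℝ, x ∈ Set.Ico (0:ℝ) 1 → F ((x : ℝ) : AddCircle (1:ℝ)) = g x := by
    intro x hx
    rw [hF]
    exact AddCircle.liftIco_zero_coe_apply (f := g) hx
  -- Fourier coefficients
  set c : ℤ → ℂ := fun n => ∫ t in (0:ℝ)..1, f (t : ℂ) *
      Complex.exp (-(2 * (Real.pi : ℂ) * Complex.I) * (n : ℂ) * (t : ℂ)) with hc
  have hcoeff : ∀ n : ℤ, fourierCoeff (⇑F) n = c n := by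
    intro n
    have h1 : fourierCoeff (⇑F) n = fourierCoeffOn (lt_add_of_pos_right (0:ℝ) one_pos) g n := by
      rw [hF]
      exact fourierCoeff_liftIco_eq g n
    rw [h1, fourierCoeffOn_eq_integral]
    simp only [zero_add, sub_zero, one_smul, div_one, one_div, inv_one]
    rw [hc]
    refine intervalIntegral.integral_congr fun t _ => ?_
    rw [fourier_coe_apply, smul_eq_mul, mul_comm, hgdef]
    simp only []
    congr 1
    congr 1
    push_cast
    ring
  set r : ℝ := Real.exp (-(2 * Real.pi * ρ' * N)) with hr
  have hr0 : 0 < r := Real.exp_pos _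
  have hr1 : r < 1 := by
    rw [hr, Real.exp_lt_one_iff]
    have : 0 < 2 * Real.pi * ρ' * N := by positivity
    linarith
  -- decay of coefficients
  have hdecay : ∀ n : ℤ, ‖c n‖ ≤ Real.exp (-(2 * Real.pi * ρ' * |(n:ℝ)|)) * M :=
    fun n => my_decay ρ' hρ f hdiff hcont hper M hM n
  -- summability
  have hsummable : Summable (fourierCoeff (⇑F)) := by
    set q : ℝ := Real.exp (-(2 * Real.pi * ρ')) with hq
    have hq0 : 0 ≤ q := (Real.exp_pos _).le
    have hq1 : q < 1 := by
      rw [hq, Real.exp_lt_one_iff]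
      have : 0 < 2 * Real.pi * ρ' := by positivity
      linarith
    have hmaj : Summable (fun n : ℤ => q ^ n.natAbs * M) := by
      apply Summable.mul_right
      apply Summable.of_nat_of_neg
      · simpa using summable_geometric_of_lt_one hq0 hq1
      · refine (summable_geometric_of_lt_one hq0 hq1).congr fun n => ?_
        simp
    refine Summable.of_norm (hmaj.of_nonneg_of_le (fun n => norm_nonneg _) fun n => ?_)
    rw [hcoeff n]
    refine (hdecay n).trans (le_of_eq ?_)
    congr 1
    rw [hq, ← Real.exp_nat_mul]
    congr 1
    rw [show |(n:ℝ)| = ((n.natAbs : ℕ) : ℝ) from (my_natAbs_cast n).symm]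
    ring
  -- pointwise convergence at grid points
  have hpoint : ∀ j : Fin N, HasSum
      (fun n : ℤ => c n * Complex.exp (2 * (Real.pi:ℂ) * Complex.I * n * j / N))
      (f (((j:ℕ):ℂ) / (N:ℂ))) := by
    intro j
    have hmem : ((j:ℕ):ℝ) / (N:ℝ) ∈ Set.Ico (0:ℝ) 1 := by
      constructor
      · positivity
      · rw [div_lt_one hNR]
        exact_mod_cast j.2
    have := has_pointwise_sum_fourier_series_of_summable hsummable
      (((((j:ℕ):ℝ) / (N:ℝ)) : ℝ) : AddCircle (1:ℝ))
    rw [hFcoe _ hmem] at this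
    have hgval : g (((j:ℕ):ℝ) / (N:ℝ)) = f (((j:ℕ):ℂ) / (N:ℂ)) := by
      rw [hgdef]; push_cast; norm_num
    rw [hgval] at this
    refine this.congr_fun fun n => ?_
    rw [hcoeff n, fourier_coe_apply, smul_eq_mul]
    congr 1
    push_cast
    field_simp
  -- multiply by DFT weights and sum over grid
  set a : Fin N → ℂ := fun j => Complex.exp (-(2 * (Real.pi : ℂ) * Complex.I) * (k : ℂ)
      * ((j:ℕ):ℂ) / (N:ℂ)) / (N:ℂ) with ha
  set T : ℂ := ∑ j : Fin N, f (((j:ℕ):ℂ) / (N:ℂ)) * a j with hT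
  have hswap : HasSum
      (fun n : ℤ => ∑ j : Fin N,
        c n * Complex.exp (2 * (Real.pi:ℂ) * Complex.I * n * j / N) * a j) T :=
    hasSum_sum fun j _ => (hpoint j).mul_right (a j)
  have hinner : ∀ n : ℤ, (∑ j : Fin N,
      c n * Complex.exp (2 * (Real.pi:ℂ) * Complex.I * n * j / N) * a j)
      = if (N:ℤ) ∣ (n - k) then c n else 0 := by
    intro n
    have h1 : ∀ j : Fin N,
        c n * Complex.exp (2 * (Real.pi:ℂ) * Complex.I * n * j / N) * a j
        = c n / N * Complex.exp (2 * (Real.pi:ℂ) * Complex.I * ((n - k : ℤ)) * j / N) := by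
      intro j
      have hE : Complex.exp (2 * (Real.pi:ℂ) * Complex.I * n * j / N) *
          Complex.exp (-(2 * (Real.pi : ℂ) * Complex.I) * (k : ℂ) * ((j:ℕ):ℂ) / (N:ℂ))
          = Complex.exp (2 * (Real.pi:ℂ) * Complex.I * ((n - k : ℤ)) * j / N) := by
        rw [← Complex.exp_add]
        congr 1
        push_cast
        ring
      simp only [ha]
      calc c n * Complex.exp (2 * (Real.pi:ℂ) * Complex.I * n * j / N) *
            (Complex.exp (-(2 * (Real.pi : ℂ) * Complex.I) * (k : ℂ) * ((j:ℕ):ℂ) / (N:ℂ)) / N)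
          = c n / N * (Complex.exp (2 * (Real.pi:ℂ) * Complex.I * n * j / N) *
            Complex.exp (-(2 * (Real.pi : ℂ) * Complex.I) * (k : ℂ) * ((j:ℕ):ℂ) / (N:ℂ))) := by
            ring
        _ = _ := by rw [hE]
    rw [Finset.sum_congr rfl fun j _ => h1 j, ← Finset.mul_sum, my_rou N hN (n - k)]
    split
    · field_simp
    · rw [mul_zero]
  have hA : HasSum (fun n : ℤ => if (N:ℤ) ∣ (n - k) then c n else 0) T :=
    hswap.congr_fun fun n => (hinner n).symm
  -- reindex along the arithmetic progression k + N*l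
  have he : Function.Injective (fun l : ℤ => k + N * l) := by
    intro x y hxy
    simp only [] at hxy
    have h2 : (N:ℤ) * x = N * y := by linarith
    exact mul_left_cancel₀ (by exact_mod_cast hN.ne' : (N:ℤ) ≠ 0) h2
  have hB : HasSum (fun l : ℤ => c (k + N * l)) T := by
    have hsupp : ∀ n : ℤ, n ∉ Set.range (fun l : ℤ => k + N * l) →
        (if (N:ℤ) ∣ (n - k) then c n else 0) = 0 := by
      intro n hn
      rw [if_neg]
      intro ⟨l, hl⟩
      exact hn ⟨l, by simp only []; linarith⟩
    have := (he.hasSum_iff hsupp).mpr hA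
    refine this.congr_fun fun l => ?_
    simp only [Function.comp]
    rw [if_pos ⟨l, by ring⟩]
  have h0 : HasSum (fun l : ℤ => if l = 0 then c k else 0) (c k) := hasSum_ite_eq 0 (c k)
  have hC : HasSum (fun l : ℤ => if l = 0 then 0 else c (k + N * l)) (T - c k) := by
    refine (hB.sub h0).congr_fun fun l => ?_
    by_cases hl : l = 0
    · subst hl; simp
    · simp [hl]
  -- the bound
  set A : ℝ := Real.exp (-(2 * Real.pi * ρ' * k)) * M with hAdef
  set B : ℝ := Real.exp (2 * Real.pi * ρ' * k) * M with hBdef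
  have hgeom := my_geom r A B hr0.le hr1
  have hbound : ∀ l : ℤ, ‖(if l = 0 then 0 else c (k + N * l))‖
      ≤ (if l = 0 then 0 else (if 0 < l then A else B) * r ^ l.natAbs) := by
    intro l
    by_cases hl : l = 0
    · simp [hl]
    · rw [if_neg hl, if_neg hl]
      refine (hdecay (k + N * l)).trans (le_of_eq ?_)
      have hN1 : (1:ℤ) ≤ N := by exact_mod_cast hN
      rcases lt_or_gt_of_ne hl with hlneg | hlpos
      · -- l < 0
        have hklneg : k + N * l < 0 := by nlinarith
        have habs : |((k + N * l : ℤ) : ℝ)| = -(((k + N * l : ℤ) : ℝ)) :=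
          _root_.abs_of_neg (by exact_mod_cast hklneg)
        have hnatl : ((l.natAbs : ℕ) : ℝ) = -(l : ℝ) := by
          rw [my_natAbs_cast]
          exact _root_.abs_of_neg (by exact_mod_cast hlneg)
        have key : Real.exp (-(2 * Real.pi * ρ' * |((k + N * l : ℤ) : ℝ)|))
            = Real.exp (2 * Real.pi * ρ' * k) * r ^ l.natAbs := by
          rw [hr, ← Real.exp_nat_mul, ← Real.exp_add]
          congr 1
          rw [hnatl, habs]
          push_cast
          ring
        rw [if_neg (not_lt.mpr hlneg.le), hBdef, key]
        ring
      · -- l > 0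
        have hklpos : 0 < k + N * l := by nlinarith
        have habs : |((k + N * l : ℤ) : ℝ)| = ((k + N * l : ℤ) : ℝ) :=
          _root_.abs_of_pos (by exact_mod_cast hklpos)
        have hnatl : ((l.natAbs : ℕ) : ℝ) = (l : ℝ) := by
          rw [my_natAbs_cast]
          exact _root_.abs_of_pos (by exact_mod_cast hlpos)
        have key : Real.exp (-(2 * Real.pi * ρ' * |((k + N * l : ℤ) : ℝ)|))
            = Real.exp (-(2 * Real.pi * ρ' * k)) * r ^ l.natAbs := by
          rw [hr, ← Real.exp_nat_mul, ← Real.exp_add]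
          congr 1
          rw [hnatl, habs]
          push_cast
          ring
        rw [if_pos hlpos, hAdef, key]
        ring
  have hfinal := tsum_of_norm_bounded hgeom hbound
  rw [hC.tsum_eq] at hfinal
  have hck : (∫ t in (0:ℝ)..1, f (t : ℂ) *
      Complex.exp (-(2 * (Real.pi : ℂ) * Complex.I) * (k : ℂ) * (t : ℂ))) = c k := by rw [hc]
  have hTeq : (1 / (N : ℂ)) * (∑ j : Fin N, f (((j : ℕ) : ℂ) / (N : ℂ)) *
      Complex.exp (-(2 * (Real.pi : ℂ) * Complex.I) * (k : ℂ) * ((j : ℕ) : ℂ) / (N : ℂ))) = T := by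
    rw [hT, Finset.mul_sum]
    refine Finset.sum_congr rfl fun j _ => ?_
    rw [ha]
    ring
  rw [hck, hTeq]
  refine le_trans ?_ (le_of_eq (?_ : r / (1 - r) * (A + B) = _))
  · exact hfinal
  · rw [hAdef, hBdef]
    ring
end

section
/- Let A : 𝕋ⁿ → ℂ^{m×m} have entries analytic and bounded on the strip 𝕋ⁿ_ρ̂. Suppose X̃ is a matrix of trigonometric polynomials (supported on modes in I_N) such that A(θ_j)X̃(θ_j) = I_m at every grid point θ_j of the regular grid of size N. Then the error E(θ) = I_m − A(θ)X̃(θ) satisfies ‖E‖_ρ ≤ C_N(ρ,ρ̂)‖A‖_ρ̂‖X̃‖_ρ̂ for 0 ≤ ρ < ρ̂; moreover, if ‖E‖_ρ < 1 then A(θ) is invertible for all θ ∈ 𝕋ⁿ_ρ and ‖A^{-1} − X̃‖_ρ ≤ ‖X̃‖_ρ̂ ‖E‖_ρ / (1 − ‖E‖_ρ). -/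
open scoped BigOperators

/-- Discrete Fourier transform coefficient of `f` on the regular grid of size `N`. -/
noncomputable def dftCoef (n : ℕ) (N : Fin n → ℕ) (f : (Fin n → ℂ) → ℂ)
    (k : Fin n → ℤ) : ℂ :=
  (1 / ∏ i, (N i : ℂ)) * ∑ j : (i : Fin n) → Fin (N i),
    f (fun i => (((j i : ℕ) : ℝ) / (N i : ℝ) : ℂ)) *
      Complex.exp (-(2 * (Real.pi : ℂ) * Complex.I) *
        ∑ i, (k i : ℂ) * ((j i : ℕ) : ℂ) / (N i : ℂ))

/-- Discrete Fourier approximation of `f`. -/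
noncomputable def dftApprox (n : ℕ) (N : Fin n → ℕ) (f : (Fin n → ℂ) → ℂ)
    (z : Fin n → ℂ) : ℂ :=
  ∑ j : (i : Fin n) → Fin (N i),
    dftCoef n N f (fun i => (j i : ℤ) - (N i : ℤ) / 2) *
      Complex.exp (2 * (Real.pi : ℂ) * Complex.I *
        ∑ i, (((j i : ℤ) - (N i : ℤ) / 2 : ℤ) : ℂ) * z i)

open Complex in
lemma exp_two_pi_I_int (k : ℤ) : Complex.exp (2 * (Real.pi:ℂ) * Complex.I * k) = 1 := by
  rw [mul_comm]
  exact Complex.exp_int_mul_two_pi_mul_I k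

lemma sum_exp_eq (Nv : ℕ) (hNv : 0 < Nv) (k : ℤ) :
    ∑ j : Fin Nv, Complex.exp (-(2 * (Real.pi:ℂ) * Complex.I) * ((k:ℂ) * ((j:ℕ):ℂ) / (Nv:ℂ))) =
      if (Nv:ℤ) ∣ k then (Nv:ℂ) else 0 := by
  have hN0 : (Nv:ℂ) ≠ 0 := Nat.cast_ne_zero.mpr hNv.ne'
  have h2pi : (2 * (Real.pi:ℂ) * Complex.I) ≠ 0 := by
    simp [Real.pi_ne_zero, Complex.I_ne_zero, Complex.ofReal_ne_zero]
  set ω : ℂ := Complex.exp (-(2 * (Real.pi:ℂ) * Complex.I) * ((k:ℂ) / (Nv:ℂ))) with hω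
  have hterm : ∀ j : Fin Nv,
      Complex.exp (-(2 * (Real.pi:ℂ) * Complex.I) * ((k:ℂ) * ((j:ℕ):ℂ) / (Nv:ℂ))) = ω ^ (j:ℕ) := by
    intro j
    rw [hω, ← Complex.exp_nat_mul]
    congr 1
    ring
  have hωN : ω ^ Nv = 1 := by
    rw [hω, ← Complex.exp_nat_mul]
    have : (Nv:ℂ) * (-(2 * (Real.pi:ℂ) * Complex.I) * ((k:ℂ) / (Nv:ℂ)))
        = 2 * (Real.pi:ℂ) * Complex.I * ((-k : ℤ) : ℂ) := by
      push_cast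
      field_simp
    rw [this, exp_two_pi_I_int]
  simp_rw [hterm]
  by_cases h : (Nv:ℤ) ∣ k
  · obtain ⟨t, rfl⟩ := h
    have hω1 : ω = 1 := by
      rw [hω]
      have : -(2 * (Real.pi:ℂ) * Complex.I) * (((Nv * t : ℤ):ℂ) / (Nv:ℂ))
          = 2 * (Real.pi:ℂ) * Complex.I * ((-t : ℤ) : ℂ) := by
        push_cast
        field_simp
      rw [this, exp_two_pi_I_int]
    simp [hω1, if_pos (Dvd.intro t rfl)]
  · have hωne : ω ≠ 1 := by
      intro heq
      rw [hω, Complex.exp_eq_one_iff] at heq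
      obtain ⟨t, ht⟩ := heq
      have h3 : (2 * (Real.pi:ℂ) * Complex.I) * (-(k:ℂ) / (Nv:ℂ)) = (2 * (Real.pi:ℂ) * Complex.I) * t := by
        linear_combination ht
      have h4 : -(k:ℂ) / (Nv:ℂ) = t := mul_left_cancel₀ h2pi h3
      have h5 : (k:ℂ) = ((-t * Nv : ℤ):ℂ) := by
        field_simp at h4
        push_cast
        linear_combination -h4
      have h6 : k = -t * Nv := by exact_mod_cast h5
      exact h ⟨-t, by rw [h6]; ring⟩
    rw [Fin.sum_univ_eq_sum_range (fun j => ω ^ j), geom_sum_eq hωne, hωN]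
    simp [if_neg h]


lemma dftCoef_const (n : ℕ) (N : Fin n → ℕ) (hN : ∀ i, 0 < N i) (c : ℂ) (k : Fin n → ℤ) :
    dftCoef n N (fun _ => c) k = if ∀ i, (N i : ℤ) ∣ k i then c else 0 := by
  classical
  unfold dftCoef
  have h1 : ∀ j : (i : Fin n) → Fin (N i),
      Complex.exp (-(2 * (Real.pi : ℂ) * Complex.I) * ∑ i, (k i : ℂ) * ((j i : ℕ) : ℂ) / (N i : ℂ))
        = ∏ i, Complex.exp (-(2 * (Real.pi : ℂ) * Complex.I) *
            ((k i : ℂ) * ((j i : ℕ) : ℂ) / (N i : ℂ))) := by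
    intro j
    rw [← Complex.exp_sum, Finset.mul_sum]
  simp_rw [h1]
  rw [← Finset.mul_sum, ← Fintype.prod_sum
    (fun i (x : Fin (N i)) => Complex.exp (-(2 * (Real.pi : ℂ) * Complex.I) *
      ((k i : ℂ) * ((x : ℕ) : ℂ) / (N i : ℂ))))]
  have h2 : ∀ i, (∑ x : Fin (N i), Complex.exp (-(2 * (Real.pi : ℂ) * Complex.I) *
      ((k i : ℂ) * ((x : ℕ) : ℂ) / (N i : ℂ)))) = if (N i : ℤ) ∣ k i then (N i : ℂ) else 0 :=
    fun i => sum_exp_eq (N i) (hN i) (k i)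
  simp_rw [h2]
  by_cases hall : ∀ i, (N i : ℤ) ∣ k i
  · have : ∀ i, (if (N i : ℤ) ∣ k i then (N i : ℂ) else 0) = (N i : ℂ) := fun i => if_pos (hall i)
    simp_rw [this]
    rw [if_pos hall]
    have hne : (∏ i, (N i : ℂ)) ≠ 0 :=
      Finset.prod_ne_zero_iff.mpr fun i _ => Nat.cast_ne_zero.mpr (hN i).ne'
    field_simp
  · push_neg at hall
    obtain ⟨i0, hi0⟩ := hall
    have hz : (∏ x, if (N x : ℤ) ∣ k x then (N x : ℂ) else 0) = 0 :=
      Finset.prod_eq_zero (Finset.mem_univ i0) (by rw [if_neg hi0])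
    rw [hz, if_neg (fun hc => hi0 (hc i0))]
    ring

lemma dftApprox_congr (n : ℕ) (N : Fin n → ℕ) (f g : (Fin n → ℂ) → ℂ)
    (h : ∀ j : (i : Fin n) → Fin (N i),
      f (fun i => (((j i : ℕ) : ℝ) / (N i : ℝ) : ℂ)) = g (fun i => (((j i : ℕ) : ℝ) / (N i : ℝ) : ℂ))) :
    dftApprox n N f = dftApprox n N g := by
  funext z
  unfold dftApprox dftCoef
  simp_rw [h]

lemma dftApprox_const (n : ℕ) (N : Fin n → ℕ) (hN : ∀ i, 0 < N i) (c : ℂ) (z : Fin n → ℂ) :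
    dftApprox n N (fun _ => c) z = c := by
  classical
  unfold dftApprox
  have hlt : ∀ i, N i / 2 < N i := fun i => Nat.div_lt_self (hN i) one_lt_two
  set j0 : (i : Fin n) → Fin (N i) := fun i => ⟨N i / 2, hlt i⟩ with hj0
  rw [Finset.sum_eq_single j0]
  · have hk : ∀ i, ((j0 i : ℕ) : ℤ) - (N i : ℤ) / 2 = 0 := by
      intro i
      simp only [hj0]
      omega
    rw [dftCoef_const n N hN]
    rw [if_pos (fun i => by rw [hk i]; exact dvd_zero _)]
    have : (∑ i, ((((j0 i : ℤ) - (N i : ℤ) / 2 : ℤ)) : ℂ) * z i) = 0 := by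
      apply Finset.sum_eq_zero
      intro i _
      rw [hk i]
      simp
    rw [this]
    simp
  · intro j _ hj
    have : ∃ i, j i ≠ j0 i := by
      by_contra hcon
      push_neg at hcon
      exact hj (funext hcon)
    obtain ⟨i0, hi0⟩ := this
    rw [dftCoef_const n N hN]
    rw [if_neg, zero_mul]
    intro hall
    have hd := hall i0
    have hb1 : (0:ℤ) ≤ (j0 i0 : ℤ) := Int.natCast_nonneg _
    have hb2 : ((j0 i0 : ℕ) : ℤ) < N i0 := by exact_mod_cast (j0 i0).2
    have hb3 : (0:ℤ) ≤ (j i0 : ℤ) := Int.natCast_nonneg _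
    have hb4 : ((j i0 : ℕ) : ℤ) < N i0 := by exact_mod_cast (j i0).2
    have hj0v : ((j0 i0 : ℕ) : ℤ) = (N i0 : ℤ) / 2 := by
      simp only [hj0]
      omega
    have habs : |((j i0 : ℕ) : ℤ) - (N i0 : ℤ) / 2| < (N i0 : ℤ) := by
      rw [abs_lt]
      omega
    have := Int.eq_zero_of_abs_lt_dvd hd habs
    have : ((j i0 : ℕ) : ℤ) = ((j0 i0 : ℕ) : ℤ) := by omega
    exact hi0 (Fin.ext (by exact_mod_cast this))
  · intro hne
    exact absurd (Finset.mem_univ j0) hne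

attribute [local instance] Matrix.linftyOpNormedRing Matrix.linftyOpNormedAlgebra

/-- Validation of approximate inverses of analytic matrix functions: if the trigonometric
polynomial matrix `X̃` satisfies `A X̃ = I` on the grid, then `E = I − A X̃` satisfies
`‖E‖_ρ ≤ C_N(ρ,ρ̂)‖A‖_ρ̂‖X̃‖_ρ̂`, and if `‖E‖_ρ < 1` then `A` is invertible on the strip with
`‖A⁻¹ − X̃‖_ρ ≤ ‖X̃‖_ρ̂ ‖E‖_ρ/(1 − ‖E‖_ρ)`. -/
theorem matrix_inverse_validation
    (n m : ℕ) (hn : 0 < n) (hm : 0 < m) (N : Fin n → ℕ) (hN : ∀ i, 0 < N i)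
    (ρ ρ' : ℝ) (h0 : 0 ≤ ρ) (hρ : ρ < ρ') (C : ℝ)
    -- `C` is a discrete-Fourier-approximation error constant for analytic functions
    (hC : ∀ (g : (Fin n → ℂ) → ℂ) (Mg : ℝ),
      DifferentiableOn ℂ g {z | ∀ i, |(z i).im| < ρ'} →
      (∀ (z : Fin n → ℂ) (e : Fin n → ℤ), g (z + fun i => (e i : ℂ)) = g z) →
      (∀ z : Fin n → ℂ, (∀ i, |(z i).im| < ρ') → ‖g z‖ ≤ Mg) →
      ∀ z : Fin n → ℂ, (∀ i, |(z i).im| ≤ ρ) →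
        ‖dftApprox n N g z - g z‖ ≤ C * Mg)
    (A : (Fin n → ℂ) → Matrix (Fin m) (Fin m) ℂ)
    (hA : ∀ p q, DifferentiableOn ℂ (fun z => A z p q) {z | ∀ i, |(z i).im| < ρ'})
    (hAper : ∀ (z : Fin n → ℂ) (e : Fin n → ℤ), A (z + fun i => (e i : ℂ)) = A z)
    -- entrywise sup bounds of `A` on the strip, whose row sums give `‖A‖_ρ̂ ≤ MA`
    (MAe : Fin m → Fin m → ℝ)
    (hMAe : ∀ z : Fin n → ℂ, (∀ i, |(z i).im| < ρ') → ∀ p q, ‖A z p q‖ ≤ MAe p q)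
    (MA : ℝ) (hMA : ∀ p, ∑ q, MAe p q ≤ MA)
    -- `X̃` is a matrix of trigonometric polynomials supported on the modes in `I_N`
    (c : ((i : Fin n) → Fin (N i)) → Matrix (Fin m) (Fin m) ℂ)
    (X : (Fin n → ℂ) → Matrix (Fin m) (Fin m) ℂ)
    (hX : ∀ z, X z = ∑ j : (i : Fin n) → Fin (N i),
      Complex.exp (2 * (Real.pi : ℂ) * Complex.I *
        ∑ i, (((j i : ℤ) - (N i : ℤ) / 2 : ℤ) : ℂ) * z i) • c j)
    (MXe : Fin m → Fin m → ℝ)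
    (hMXe : ∀ z : Fin n → ℂ, (∀ i, |(z i).im| < ρ') → ∀ p q, ‖X z p q‖ ≤ MXe p q)
    (MX : ℝ) (hMX : ∀ p, ∑ q, MXe p q ≤ MX)
    -- interpolation of the identity at all grid points
    (hinterp : ∀ j : (i : Fin n) → Fin (N i),
      A (fun i => (((j i : ℕ) : ℝ) / (N i : ℝ) : ℂ)) *
        X (fun i => (((j i : ℕ) : ℝ) / (N i : ℝ) : ℂ)) = 1) :
    (∀ p : Fin m,
      ∑ q, ⨆ z : {z : Fin n → ℂ // ∀ i, |(z i).im| ≤ ρ},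
        ‖(1 - A z.1 * X z.1) p q‖ ≤ C * MA * MX) ∧
    (∀ e : ℝ,
      (∀ z : Fin n → ℂ, (∀ i, |(z i).im| ≤ ρ) → ∀ p,
        ∑ q, ‖(1 - A z * X z) p q‖ ≤ e) →
      e < 1 →
      ∀ z : Fin n → ℂ, (∀ i, |(z i).im| ≤ ρ) →
        IsUnit (A z) ∧ ∀ p, ∑ q, ‖((A z)⁻¹ - X z) p q‖ ≤ MX * e / (1 - e)) := by
  classical
  have hz0 : ∀ i, |((fun _ => 0 : Fin n → ℂ) i).im| ≤ ρ := fun i => by simpa using h0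
  have hz0' : ∀ i, |((fun _ => 0 : Fin n → ℂ) i).im| < ρ' := fun i => by
    simpa using lt_of_le_of_lt h0 hρ
  have hMAe0 : ∀ p q, 0 ≤ MAe p q := fun p q =>
    le_trans (norm_nonneg _) (hMAe _ hz0' p q)
  have hMXe0 : ∀ p q, 0 ≤ MXe p q := fun p q =>
    le_trans (norm_nonneg _) (hMXe _ hz0' p q)
  have hMA0 : 0 ≤ MA := le_trans (Finset.sum_nonneg fun q _ => hMAe0 ⟨0, hm⟩ q) (hMA ⟨0, hm⟩)
  have hMX0 : 0 ≤ MX := le_trans (Finset.sum_nonneg fun q _ => hMXe0 ⟨0, hm⟩ q) (hMX ⟨0, hm⟩)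
  have hC0 : 0 ≤ C := by
    have h := hC (fun _ => (1 : ℂ)) 1 (differentiableOn_const _) (fun z e => rfl)
      (fun z hz => by simp) (fun _ => 0) hz0
    rw [dftApprox_const n N hN] at h
    simpa using h
  have hXdiff : ∀ r q, Differentiable ℂ (fun z => X z r q) := by
    intro r q
    have hXe : (fun z => X z r q) = fun z => ∑ j : (i : Fin n) → Fin (N i),
        Complex.exp (2 * (Real.pi : ℂ) * Complex.I *
          ∑ i, (((j i : ℤ) - (N i : ℤ) / 2 : ℤ) : ℂ) * z i) * c j r q := by
      funext z
      rw [hX z]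
      simp [Matrix.sum_apply, Matrix.smul_apply, smul_eq_mul]
    rw [hXe]
    apply Differentiable.fun_sum
    intro j _
    apply Differentiable.mul _ (differentiable_const _)
    apply Complex.differentiable_exp.comp
    apply Differentiable.const_mul
    apply Differentiable.fun_sum
    intro i _
    exact ((ContinuousLinearMap.proj i : (Fin n → ℂ) →L[ℂ] ℂ).differentiable).const_mul _
  have hXper : ∀ (z : Fin n → ℂ) (e : Fin n → ℤ), X (z + fun i => (e i : ℂ)) = X z := by
    intro z e
    rw [hX, hX]
    apply Finset.sum_congr rfl
    intro j _
    congr 1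
    have hsum : (∑ i, (((j i : ℤ) - (N i : ℤ) / 2 : ℤ) : ℂ) * (z + fun i => (e i : ℂ)) i)
        = (∑ i, (((j i : ℤ) - (N i : ℤ) / 2 : ℤ) : ℂ) * z i)
          + ((∑ i, ((j i : ℤ) - (N i : ℤ) / 2) * e i : ℤ) : ℂ) := by
      push_cast
      simp only [Pi.add_apply]
      rw [← Finset.sum_add_distrib]
      apply Finset.sum_congr rfl
      intro i _
      ring
    rw [hsum, mul_add, Complex.exp_add, exp_two_pi_I_int, mul_one]
  have key : ∀ (z : Fin n → ℂ), (∀ i, |(z i).im| ≤ ρ) → ∀ p q,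
      ‖(1 - A z * X z) p q‖ ≤ C * (∑ r, MAe p r * MXe r q) := by
    intro z hz p q
    set g : (Fin n → ℂ) → ℂ := fun w => (A w * X w) p q with hg
    have hge : ∀ w, g w = ∑ r, A w p r * X w r q := fun w => Matrix.mul_apply
    have hdiff : DifferentiableOn ℂ g {w | ∀ i, |(w i).im| < ρ'} := by
      have h : g = fun w => ∑ r, A w p r * X w r q := funext hge
      rw [h]
      apply DifferentiableOn.fun_sum
      intro r _
      exact (hA p r).mul ((hXdiff r q).differentiableOn)
    have hper : ∀ (w : Fin n → ℂ) (e : Fin n → ℤ), g (w + fun i => (e i : ℂ)) = g w := by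
      intro w e
      simp only [hg, hAper w e, hXper w e]
    have hbound : ∀ w, (∀ i, |(w i).im| < ρ') →
        ‖g w‖ ≤ ∑ r, MAe p r * MXe r q := by
      intro w hw
      rw [hge]
      refine le_trans (norm_sum_le _ _) (Finset.sum_le_sum fun r _ => ?_)
      rw [norm_mul]
      exact mul_le_mul (hMAe w hw p r) (hMXe w hw r q) (norm_nonneg _) (hMAe0 p r)
    have happrox := hC g (∑ r, MAe p r * MXe r q) hdiff hper hbound z hz
    have hgridg : ∀ j : (i : Fin n) → Fin (N i),
        g (fun i => (((j i : ℕ) : ℝ) / (N i : ℝ) : ℂ))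
          = (fun _ => (1 : Matrix (Fin m) (Fin m) ℂ) p q)
              (fun i => (((j i : ℕ) : ℝ) / (N i : ℝ) : ℂ)) := by
      intro j
      simp only [hg]
      rw [hinterp j]
    have hda : dftApprox n N g = dftApprox n N (fun _ => (1 : Matrix (Fin m) (Fin m) ℂ) p q) :=
      dftApprox_congr n N _ _ hgridg
    rw [hda, dftApprox_const n N hN] at happrox
    have hrw : (1 - A z * X z) p q = (1 : Matrix (Fin m) (Fin m) ℂ) p q - g z := by
      simp [Matrix.sub_apply, hg]
    rw [hrw]
    exact happrox
  refine ⟨?_, ?_⟩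
  · intro p
    haveI : Nonempty {z : Fin n → ℂ // ∀ i, |(z i).im| ≤ ρ} := ⟨⟨fun _ => 0, hz0⟩⟩
    have hsup : ∀ q, (⨆ z : {z : Fin n → ℂ // ∀ i, |(z i).im| ≤ ρ},
        ‖(1 - A z.1 * X z.1) p q‖) ≤ C * (∑ r, MAe p r * MXe r q) :=
      fun q => ciSup_le fun z => key z.1 z.2 p q
    refine le_trans (Finset.sum_le_sum fun q _ => hsup q) ?_
    calc ∑ q, C * (∑ r, MAe p r * MXe r q)
        = C * ∑ r, MAe p r * ∑ q, MXe r q := by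
          rw [← Finset.mul_sum]
          congr 1
          rw [Finset.sum_comm]
          exact Finset.sum_congr rfl fun r _ => (Finset.mul_sum _ _ _).symm
      _ ≤ C * ∑ r, MAe p r * MX := by
          apply mul_le_mul_of_nonneg_left _ hC0
          exact Finset.sum_le_sum fun r _ => mul_le_mul_of_nonneg_left (hMX r) (hMAe0 p r)
      _ ≤ C * (MA * MX) := by
          apply mul_le_mul_of_nonneg_left _ hC0
          rw [← Finset.sum_mul]
          exact mul_le_mul_of_nonneg_right (hMA p) hMX0
      _ = C * MA * MX := by ring
  · intro e he he1 z hz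
    haveI : Nonempty (Fin m) := ⟨⟨0, hm⟩⟩
    haveI : CompleteSpace (Matrix (Fin m) (Fin m) ℂ) :=
      FiniteDimensional.complete ℂ (Matrix (Fin m) (Fin m) ℂ)
    have hz' : ∀ i, |(z i).im| < ρ' := fun i => lt_of_le_of_lt (hz i) hρ
    have hrow' : ∀ (M : Matrix (Fin m) (Fin m) ℂ) (p : Fin m),
        ∑ q, ‖M p q‖ ≤ ‖M‖ := by
      intro M p
      rw [Matrix.linfty_opNorm_def]
      have h1 : (∑ q, ‖M p q‖₊) ≤ Finset.univ.sup (fun i => ∑ j, ‖M i j‖₊) :=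
        Finset.le_sup (f := fun i => ∑ j, ‖M i j‖₊) (Finset.mem_univ p)
      have h2 := NNReal.coe_le_coe.mpr h1
      rw [NNReal.coe_sum] at h2
      simpa using h2
    have hrow : ∀ (M : Matrix (Fin m) (Fin m) ℂ) (b : ℝ), 0 ≤ b →
        (∀ p, ∑ q, ‖M p q‖ ≤ b) → ‖M‖ ≤ b := by
      intro M b hb h
      rw [Matrix.linfty_opNorm_def]
      have hsup : Finset.univ.sup (fun i => ∑ j, ‖M i j‖₊) ≤ ⟨b, hb⟩ := by
        apply Finset.sup_le
        intro p _
        refine NNReal.coe_le_coe.mp ?_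
        rw [NNReal.coe_sum]
        exact h p
      exact_mod_cast hsup
    have he0 : 0 ≤ e :=
      le_trans (Finset.sum_nonneg fun q _ => norm_nonneg _) (he z hz ⟨0, hm⟩)
    set Ez : Matrix (Fin m) (Fin m) ℂ := 1 - A z * X z with hEz
    have hEnorm : ‖Ez‖ ≤ e := hrow _ _ he0 (he z hz)
    have hE1 : ‖Ez‖ < 1 := lt_of_le_of_lt hEnorm he1
    set u : (Matrix (Fin m) (Fin m) ℂ)ˣ := Units.oneSub Ez hE1 with hu
    have huval : (u : Matrix (Fin m) (Fin m) ℂ) = A z * X z := by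
      rw [hu, Units.val_oneSub, hEz, sub_sub_cancel]
    have hright : A z * (X z * (↑u⁻¹ : Matrix (Fin m) (Fin m) ℂ)) = 1 := by
      rw [← mul_assoc, ← huval, u.mul_inv]
    have hunit : IsUnit (A z) := by
      have := invertibleOfRightInverse _ _ hright
      exact isUnit_of_invertible _
    have hinv : (A z)⁻¹ = X z * (↑u⁻¹ : Matrix (Fin m) (Fin m) ℂ) :=
      Matrix.inv_eq_right_inv hright
    have hXnorm : ‖X z‖ ≤ MX :=
      hrow _ _ hMX0 fun p => le_trans (Finset.sum_le_sum fun q _ => hMXe z hz' p q) (hMX p)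
    have huinv : ‖(↑u⁻¹ : Matrix (Fin m) (Fin m) ℂ)‖ ≤ (1 - e)⁻¹ := by
      have h1 : (↑u⁻¹ : Matrix (Fin m) (Fin m) ℂ) = ∑' k : ℕ, Ez ^ k := rfl
      rw [h1]
      calc ‖∑' k : ℕ, Ez ^ k‖ ≤ ‖(1 : Matrix (Fin m) (Fin m) ℂ)‖ - 1 + (1 - ‖Ez‖)⁻¹ :=
            tsum_geometric_le_of_norm_lt_one Ez hE1
        _ = (1 - ‖Ez‖)⁻¹ := by rw [norm_one]; ring
        _ ≤ (1 - e)⁻¹ := inv_anti₀ (by linarith) (by linarith)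
    have hdiffm : (A z)⁻¹ - X z = X z * ((↑u⁻¹ : Matrix (Fin m) (Fin m) ℂ) * Ez) := by
      have h2 : (↑u⁻¹ : Matrix (Fin m) (Fin m) ℂ) * Ez = ↑u⁻¹ - 1 := by
        have h3 : Ez = 1 - (↑u : Matrix (Fin m) (Fin m) ℂ) := by rw [huval, hEz]
        rw [h3, mul_sub, mul_one, u.inv_mul]
      rw [hinv, h2, mul_sub, mul_one]
    refine ⟨hunit, ?_⟩
    intro p
    have hfin : ‖(A z)⁻¹ - X z‖ ≤ MX * ((1 - e)⁻¹ * e) := by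
      rw [hdiffm]
      calc ‖X z * ((↑u⁻¹ : Matrix (Fin m) (Fin m) ℂ) * Ez)‖
          ≤ ‖X z‖ * ‖(↑u⁻¹ : Matrix (Fin m) (Fin m) ℂ) * Ez‖ := norm_mul_le _ _
        _ ≤ ‖X z‖ * (‖(↑u⁻¹ : Matrix (Fin m) (Fin m) ℂ)‖ * ‖Ez‖) :=
            mul_le_mul_of_nonneg_left (norm_mul_le _ _) (norm_nonneg _)
        _ ≤ MX * ((1 - e)⁻¹ * e) := by
            apply mul_le_mul hXnorm _ (by positivity) hMX0
            exact mul_le_mul huinv hEnorm (norm_nonneg _) (inv_nonneg.mpr (by linarith))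
    calc ∑ q, ‖((A z)⁻¹ - X z) p q‖ ≤ ‖(A z)⁻¹ - X z‖ := hrow' _ p
      _ ≤ MX * ((1 - e)⁻¹ * e) := hfin
      _ = MX * e / (1 - e) := by ring
end

section
/- Ordered small divisor bound: Let ω ∈ ℝⁿ be (γ,τ)-Diophantine and for ℓ ∈ ℕ let D_ℓ = {k ∈ ℤⁿ\{0} : |k|₁ ≤ ℓ, d_k > 0} where d_k = k·ω − m_k with |d_k| = min_{m∈ℤ}|k·ω − m|. Sorting 0 < d_{k₁} < d_{k₂} < ⋯ < d_{k_{#D_ℓ}}, one has d_{k_j} ≥ (j−1)γ(2ℓ)^{−τ} + γℓ^{−τ} for each j, and consequently Σ_{j=1}^{#D_ℓ} d_{k_j}^{−2} ≤ 2^{2τ} ζ(2, 2^τ) ℓ^{2τ}/γ². -/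
open scoped BigOperators

/-- Ordered small divisor bound: if `κ` enumerates (injectively, in strictly increasing
order of the divisors) elements of `D_ℓ = {k ≠ 0 : |k|₁ ≤ ℓ, d_k > 0}`, where
`d_k = k·ω − m_k` with `m_k` a nearest integer to `k·ω`, then the `j`-th divisor satisfies
`d_{κ j} ≥ (j−1)γ(2ℓ)^{−τ} + γℓ^{−τ}` and
`∑_j d_{κ j}^{−2} ≤ 2^{2τ} ζ(2,2^τ) ℓ^{2τ}/γ²`. -/
theorem ordered_small_divisor_bound
    (n : ℕ) (hn : 0 < n) (ω : Fin n → ℝ) (γ τ : ℝ) (hγ : 0 < γ) (hτ : (n : ℝ) ≤ τ)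
    (hdio : ∀ k : Fin n → ℤ, k ≠ 0 → ∀ m : ℤ,
      γ * (∑ i, |(k i : ℝ)|) ^ (-τ) ≤ |(∑ i, (k i : ℝ) * ω i) - (m : ℝ)|)
    (mk : (Fin n → ℤ) → ℤ)
    (hmk : ∀ (k : Fin n → ℤ) (m' : ℤ),
      |(∑ i, (k i : ℝ) * ω i) - (mk k : ℝ)| ≤ |(∑ i, (k i : ℝ) * ω i) - (m' : ℝ)|)
    (ℓ : ℕ) (hℓ : 0 < ℓ) (J : ℕ) (κ : Fin J → (Fin n → ℤ))
    (hD : ∀ j : Fin J, κ j ≠ 0 ∧ (∑ i, |κ j i|) ≤ (ℓ : ℤ) ∧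
      0 < (∑ i, (κ j i : ℝ) * ω i) - (mk (κ j) : ℝ))
    (hmono : StrictMono fun j : Fin J => (∑ i, (κ j i : ℝ) * ω i) - (mk (κ j) : ℝ)) :
    (∀ j : Fin J,
      ((j : ℕ) : ℝ) * γ * ((2 * ℓ : ℕ) : ℝ) ^ (-τ) + γ * ((ℓ : ℕ) : ℝ) ^ (-τ) ≤
        (∑ i, (κ j i : ℝ) * ω i) - (mk (κ j) : ℝ)) ∧
    (∑ j : Fin J, 1 / ((∑ i, (κ j i : ℝ) * ω i) - (mk (κ j) : ℝ)) ^ 2) ≤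
      (2 : ℝ) ^ (2 * τ) * (∑' jj : ℕ, 1 / ((2 : ℝ) ^ τ + (jj : ℝ)) ^ 2) *
        ((ℓ : ℕ) : ℝ) ^ (2 * τ) / γ ^ 2 := by
  have hn1 : (1 : ℝ) ≤ (n : ℝ) := by exact_mod_cast hn
  have hτ0 : 0 < τ := lt_of_lt_of_le (by linarith) hτ
  have hℓR : (0 : ℝ) < (ℓ : ℝ) := by exact_mod_cast hℓ
  set d : Fin J → ℝ := fun j => (∑ i, (κ j i : ℝ) * ω i) - (mk (κ j) : ℝ) with hd
  -- key Diophantine bound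
  have key : ∀ (k : Fin n → ℤ), k ≠ 0 → ∀ (m : ℤ) (B : ℝ),
      (∑ i, |(k i : ℝ)|) ≤ B →
      γ * B ^ (-τ) ≤ |(∑ i, (k i : ℝ) * ω i) - (m : ℝ)| := by
    intro k hk m B hB
    have h1 : (1 : ℝ) ≤ ∑ i, |(k i : ℝ)| := by
      obtain ⟨i, hi⟩ := Function.ne_iff.mp hk
      have hi1 : (1 : ℤ) ≤ |k i| := Int.one_le_abs (by simpa using hi)
      have hi1' : (1 : ℝ) ≤ |(k i : ℝ)| := by
        rw [← Int.cast_abs]; exact_mod_cast hi1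
      exact hi1'.trans
        (Finset.single_le_sum (f := fun i => |(k i : ℝ)|)
          (fun _ _ => abs_nonneg _) (Finset.mem_univ i))
    have h2 : B ^ (-τ) ≤ (∑ i, |(k i : ℝ)|) ^ (-τ) :=
      Real.rpow_le_rpow_of_nonpos (by linarith) hB (by linarith)
    calc γ * B ^ (-τ) ≤ γ * (∑ i, |(k i : ℝ)|) ^ (-τ) :=
          mul_le_mul_of_nonneg_left h2 hγ.le
      _ ≤ _ := hdio k hk m
  -- main ordered lower bound, by induction
  have claim : ∀ (j : ℕ) (hj : j < J),
      (j : ℝ) * γ * (2 * (ℓ : ℝ)) ^ (-τ) + γ * (ℓ : ℝ) ^ (-τ) ≤ d ⟨j, hj⟩ := by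
    intro j
    induction j with
    | zero =>
      intro hj
      obtain ⟨hk0, hkℓ, hdpos⟩ := hD ⟨0, hj⟩
      have hsum : (∑ i, |(κ ⟨0, hj⟩ i : ℝ)|) ≤ (ℓ : ℝ) := by
        have : ((∑ i, |κ ⟨0, hj⟩ i| : ℤ) : ℝ) ≤ (ℓ : ℝ) := by exact_mod_cast hkℓ
        simpa [Int.cast_abs] using this
      have := key (κ ⟨0, hj⟩) hk0 (mk (κ ⟨0, hj⟩)) (ℓ : ℝ) hsum
      rw [abs_of_pos hdpos] at this
      simpa using this
    | succ j ih =>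
      intro hj
      have hj' : j < J := Nat.lt_of_succ_lt hj
      set a : Fin J := ⟨j, hj'⟩
      set b : Fin J := ⟨j + 1, hj⟩
      have hab : a < b := by simp [a, b, Fin.lt_def]
      have hdab : d a < d b := hmono hab
      set k' : Fin n → ℤ := κ b - κ a with hk'
      have hk0 : k' ≠ 0 := by
        intro h
        have : κ b = κ a := by
          have := sub_eq_zero.mp h
          exact this
        have : d b = d a := by simp [hd, this]
        linarith
      have hkb := (hD b).2.1
      have hka := (hD a).2.1
      have hsum : (∑ i, |(k' i : ℝ)|) ≤ 2 * (ℓ : ℝ) := by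
        have hZ : (∑ i, |k' i|) ≤ 2 * (ℓ : ℤ) := by
          calc (∑ i, |k' i|) ≤ ∑ i, (|κ b i| + |κ a i|) := by
                apply Finset.sum_le_sum
                intro i _
                simpa [hk'] using abs_sub (κ b i) (κ a i)
            _ = (∑ i, |κ b i|) + ∑ i, |κ a i| := Finset.sum_add_distrib
            _ ≤ 2 * (ℓ : ℤ) := by linarith
        have : ((∑ i, |k' i| : ℤ) : ℝ) ≤ ((2 * ℓ : ℤ) : ℝ) := by exact_mod_cast hZ
        push_cast [Int.cast_abs] at this ⊢
        convert this using 2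
      have hdiff : d b - d a =
          (∑ i, (k' i : ℝ) * ω i) - ((mk (κ b) - mk (κ a) : ℤ) : ℝ) := by
        simp only [hd, hk', Pi.sub_apply]
        push_cast
        simp only [sub_mul, Finset.sum_sub_distrib]
        ring
      have hkey := key k' hk0 (mk (κ b) - mk (κ a)) (2 * (ℓ : ℝ)) hsum
      rw [← hdiff, abs_of_pos (by linarith)] at hkey
      have hIH := ih hj'
      push_cast
      have : d a + γ * (2 * (ℓ : ℝ)) ^ (-τ) ≤ d b := by linarith
      calc ((j : ℝ) + 1) * γ * (2 * (ℓ : ℝ)) ^ (-τ) + γ * (ℓ : ℝ) ^ (-τ)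
          = ((j : ℝ) * γ * (2 * (ℓ : ℝ)) ^ (-τ) + γ * (ℓ : ℝ) ^ (-τ))
            + γ * (2 * (ℓ : ℝ)) ^ (-τ) := by ring
        _ ≤ d a + γ * (2 * (ℓ : ℝ)) ^ (-τ) := by linarith
        _ ≤ d b := this
  have part1 : ∀ j : Fin J,
      ((j : ℕ) : ℝ) * γ * ((2 * ℓ : ℕ) : ℝ) ^ (-τ) + γ * ((ℓ : ℕ) : ℝ) ^ (-τ) ≤ d j := by
    intro j
    have := claim j.1 j.2
    push_cast at this ⊢
    simpa using this
  refine ⟨part1, ?_⟩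
  -- second part
  set c : ℝ := γ * (2 * (ℓ : ℝ)) ^ (-τ) with hc
  have h2ℓ : (0 : ℝ) < 2 * (ℓ : ℝ) := by linarith
  have hcpos : 0 < c := mul_pos hγ (Real.rpow_pos_of_pos h2ℓ _)
  have h2τpos : (0 : ℝ) < (2 : ℝ) ^ τ := Real.rpow_pos_of_pos (by norm_num) _
  have hsplit : γ * (ℓ : ℝ) ^ (-τ) = c * (2 : ℝ) ^ τ := by
    rw [hc, Real.mul_rpow (by norm_num) hℓR.le,
      Real.rpow_neg (by norm_num : (0:ℝ) ≤ 2)]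
    field_simp
  have hdlow : ∀ j : Fin J, c * ((2 : ℝ) ^ τ + (j : ℕ)) ≤ d j := by
    intro j
    have := claim j.1 j.2
    rw [hsplit] at this
    calc c * ((2 : ℝ) ^ τ + (j : ℕ)) = (j : ℝ) * c + c * (2 : ℝ) ^ τ := by ring
      _ ≤ d j := by
        have : ((j:ℕ) : ℝ) * γ * (2 * (ℓ : ℝ)) ^ (-τ) = (j:ℝ) * c := by rw [hc]; ring
        linarith [claim j.1 j.2, this ▸ (hsplit ▸ claim j.1 j.2)]
  -- termwise bound
  have hterm : ∀ j : Fin J,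
      1 / (d j) ^ 2 ≤ (1 / c ^ 2) * (1 / ((2 : ℝ) ^ τ + ((j : ℕ) : ℝ)) ^ 2) := by
    intro j
    have hjpos : (0 : ℝ) < (2 : ℝ) ^ τ + (j : ℕ) := by positivity
    have h0 : 0 < c * ((2 : ℝ) ^ τ + (j : ℕ)) := mul_pos hcpos hjpos
    have hle := hdlow j
    have hsq : (c * ((2 : ℝ) ^ τ + (j : ℕ))) ^ 2 ≤ (d j) ^ 2 :=
      pow_le_pow_left₀ h0.le hle 2
    have := one_div_le_one_div_of_le (by positivity) hsq
    calc 1 / (d j) ^ 2 ≤ 1 / (c * ((2 : ℝ) ^ τ + (j : ℕ))) ^ 2 := this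
      _ = (1 / c ^ 2) * (1 / ((2 : ℝ) ^ τ + ((j : ℕ) : ℝ)) ^ 2) := by
        rw [mul_pow]; field_simp
  -- summability of the zeta-type series
  have h2τ1 : (1 : ℝ) ≤ (2 : ℝ) ^ τ := Real.one_le_rpow (by norm_num) hτ0.le
  have hsummable : Summable (fun jj : ℕ => 1 / ((2 : ℝ) ^ τ + (jj : ℝ)) ^ 2) := by
    have hg : Summable (fun jj : ℕ => 1 / ((jj : ℝ) + 1) ^ 2) := by
      have := Real.summable_one_div_nat_pow.mpr one_lt_two
      have := (summable_nat_add_iff 1).mpr this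
      simpa [add_comm] using this
    apply Summable.of_nonneg_of_le (fun jj => by positivity) _ hg
    intro jj
    apply one_div_le_one_div_of_le (by positivity)
    have : (jj : ℝ) + 1 ≤ (2 : ℝ) ^ τ + jj := by linarith
    nlinarith [Nat.cast_nonneg (α := ℝ) jj]
  have hsum_le : (∑ j : Fin J, 1 / ((2 : ℝ) ^ τ + ((j : ℕ) : ℝ)) ^ 2) ≤
      ∑' jj : ℕ, 1 / ((2 : ℝ) ^ τ + (jj : ℝ)) ^ 2 := by
    rw [Fin.sum_univ_eq_sum_range (fun j => 1 / ((2 : ℝ) ^ τ + (j : ℝ)) ^ 2) J]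
    exact Summable.sum_le_tsum _ (fun i _ => by positivity) hsummable
  have hC : 1 / c ^ 2 = (2 : ℝ) ^ (2 * τ) * ((ℓ : ℝ)) ^ (2 * τ) / γ ^ 2 := by
    rw [hc, mul_pow, ← Real.rpow_natCast ((2 * (ℓ:ℝ)) ^ (-τ)) 2,
      ← Real.rpow_mul h2ℓ.le]
    push_cast
    rw [show -τ * 2 = -(2 * τ) by ring, Real.rpow_neg h2ℓ.le,
      Real.mul_rpow (by norm_num : (0:ℝ) ≤ 2) hℓR.le]
    field_simp
  set Z := ∑' jj : ℕ, 1 / ((2 : ℝ) ^ τ + (jj : ℝ)) ^ 2 with hZ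
  have hZnonneg : 0 ≤ Z := tsum_nonneg (fun jj => by positivity)
  calc (∑ j : Fin J, 1 / (d j) ^ 2)
      ≤ ∑ j : Fin J, (1 / c ^ 2) * (1 / ((2 : ℝ) ^ τ + ((j : ℕ) : ℝ)) ^ 2) :=
        Finset.sum_le_sum (fun j _ => hterm j)
    _ = (1 / c ^ 2) * ∑ j : Fin J, 1 / ((2 : ℝ) ^ τ + ((j : ℕ) : ℝ)) ^ 2 := by
        rw [Finset.mul_sum]
    _ ≤ (1 / c ^ 2) * Z := by
        apply mul_le_mul_of_nonneg_left hsum_le (by positivity)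
    _ = (2 : ℝ) ^ (2 * τ) * Z * ((ℓ : ℝ)) ^ (2 * τ) / γ ^ 2 := by rw [hC]; ring
end

section
/- Triangular cohomological system: Let ω ∈ ℝⁿ be such that R_ω is ergodic on 𝕋ⁿ, let T : 𝕋ⁿ → ℝ^{n×n} be continuous with det⟨T⟩ ≠ 0, and let η = (η^L, η^N) : 𝕋ⁿ → ℝⁿ × ℝⁿ be such that the one-bite equations below admit solutions. Then the system ξ^L(θ) + T(θ)ξ^N(θ) − ξ^L(θ+ω) = η^L(θ) and ξ^N(θ) − ξ^N(θ+ω) = η^N(θ) − ⟨η^N⟩ has a solution given by ξ^N = R(η^N) + ξ^N₀ and ξ^L = R(η^L − T ξ^N) + ξ^L₀, where ξ^N₀ = ⟨T⟩^{-1}⟨η^L − T·R(η^N)⟩ and ξ^L₀ ∈ ℝⁿ arbitrary; the choice of ξ^N₀ makes ⟨η^L − T ξ^N⟩ = 0. -/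
open scoped BigOperators
open Matrix

/-- Solution of the triangular cohomological system: with `ξᴺ = R(ηᴺ) + ξᴺ₀`,
`ξᴺ₀ = ⟨T⟩⁻¹⟨ηᴸ − T·R(ηᴺ)⟩`, and `ξᴸ = R(ηᴸ − Tξᴺ) + ξᴸ₀`, the system
`ξᴸ(θ) + T(θ)ξᴺ(θ) − ξᴸ(θ+ω) = ηᴸ(θ)`, `ξᴺ(θ) − ξᴺ(θ+ω) = ηᴺ(θ) − ⟨ηᴺ⟩` is solved,
and the choice of `ξᴺ₀` makes `⟨ηᴸ − Tξᴺ⟩ = 0`. -/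
theorem triangular_cohomological_system
    (n : ℕ) (hn : 0 < n) (ω : Fin n → ℝ)
    (T : (Fin n → ℝ) → Matrix (Fin n) (Fin n) ℝ)
    (hT : ∀ p q, Continuous fun θ => T θ p q)
    (ηL ηN : (Fin n → ℝ) → (Fin n → ℝ))
    (hηL : Continuous ηL) (hηN : Continuous ηN)
    (Tavg : Matrix (Fin n) (Fin n) ℝ)
    (hTavg : ∀ p q, Tavg p q = ∫ θ in Set.Icc (0 : Fin n → ℝ) 1, T θ p q)
    (hdet : IsUnit Tavg)
    -- `u₁ = R(ηᴺ)`: the zero-average solution of the one-bite equation for `ηᴺ`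
    (u₁ : (Fin n → ℝ) → (Fin n → ℝ)) (hu₁ : Continuous u₁)
    (hu₁avg : (∫ θ in Set.Icc (0 : Fin n → ℝ) 1, u₁ θ) = 0)
    (hu₁sol : ∀ θ, u₁ θ - u₁ (θ + ω) = ηN θ - ∫ θ' in Set.Icc (0 : Fin n → ℝ) 1, ηN θ')
    (ξN0 : Fin n → ℝ)
    (hξN0 : ξN0 = Tavg⁻¹ *ᵥ ∫ θ in Set.Icc (0 : Fin n → ℝ) 1, (ηL θ - T θ *ᵥ u₁ θ))
    (ξN : (Fin n → ℝ) → (Fin n → ℝ)) (hξN : ∀ θ, ξN θ = u₁ θ + ξN0)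
    -- `u₂ = R(ηᴸ − Tξᴺ)`: the zero-average solution of the one-bite equation
    (u₂ : (Fin n → ℝ) → (Fin n → ℝ)) (hu₂ : Continuous u₂)
    (hu₂avg : (∫ θ in Set.Icc (0 : Fin n → ℝ) 1, u₂ θ) = 0)
    (hu₂sol : ∀ θ, u₂ θ - u₂ (θ + ω) =
      (ηL θ - T θ *ᵥ ξN θ) - ∫ θ' in Set.Icc (0 : Fin n → ℝ) 1, (ηL θ' - T θ' *ᵥ ξN θ'))
    (ξL0 : Fin n → ℝ) (ξL : (Fin n → ℝ) → (Fin n → ℝ)) (hξL : ∀ θ, ξL θ = u₂ θ + ξL0) :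
    (∀ θ, ξL θ + T θ *ᵥ ξN θ - ξL (θ + ω) = ηL θ) ∧
    (∀ θ, ξN θ - ξN (θ + ω) = ηN θ - ∫ θ' in Set.Icc (0 : Fin n → ℝ) 1, ηN θ') ∧
    (∫ θ in Set.Icc (0 : Fin n → ℝ) 1, (ηL θ - T θ *ᵥ ξN θ)) = 0 := by
  have hcomp : IsCompact (Set.Icc (0 : Fin n → ℝ) 1) := isCompact_Icc
  -- continuity helpers
  have hmulVec : ∀ (v : (Fin n → ℝ) → (Fin n → ℝ)), Continuous v →
      Continuous fun θ => T θ *ᵥ v θ := by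
    intro v hv
    refine continuous_pi fun p => ?_
    simp only [Matrix.mulVec, dotProduct]
    exact continuous_finset_sum _ fun q _ => (hT p q).mul ((continuous_apply q).comp hv)
  have hf1 : Continuous fun θ => ηL θ - T θ *ᵥ u₁ θ := hηL.sub (hmulVec u₁ hu₁)
  have hg : Continuous fun θ => T θ *ᵥ ξN0 :=
    hmulVec (fun _ => ξN0) continuous_const
  have hfint : MeasureTheory.IntegrableOn (fun θ => ηL θ - T θ *ᵥ u₁ θ)
      (Set.Icc (0 : Fin n → ℝ) 1) := hf1.integrableOn_Icc
  have hgint : MeasureTheory.IntegrableOn (fun θ => T θ *ᵥ ξN0)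
      (Set.Icc (0 : Fin n → ℝ) 1) := hg.integrableOn_Icc
  set v : Fin n → ℝ := ∫ θ in Set.Icc (0 : Fin n → ℝ) 1, (ηL θ - T θ *ᵥ u₁ θ) with hv
  -- ∫ T θ *ᵥ ξN0 = Tavg *ᵥ ξN0
  have hintg : (∫ θ in Set.Icc (0 : Fin n → ℝ) 1, T θ *ᵥ ξN0) = Tavg *ᵥ ξN0 := by
    funext p
    have happ : (∫ θ in Set.Icc (0 : Fin n → ℝ) 1, T θ *ᵥ ξN0) p
        = ∫ θ in Set.Icc (0 : Fin n → ℝ) 1, (T θ *ᵥ ξN0) p :=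
      ((ContinuousLinearMap.proj (R := ℝ) (φ := fun _ : Fin n => ℝ) p).integral_comp_comm
        hgint).symm
    rw [happ]
    simp only [Matrix.mulVec, dotProduct]
    rw [MeasureTheory.integral_finset_sum]
    · refine Finset.sum_congr rfl fun q _ => ?_
      rw [MeasureTheory.integral_mul_const, hTavg p q]
    · intro q _
      exact ((hT p q).mul continuous_const).integrableOn_Icc
  -- Tavg *ᵥ ξN0 = v
  have hTv : Tavg *ᵥ ξN0 = v := by
    rw [hξN0, Matrix.mulVec_mulVec,
      Matrix.mul_nonsing_inv Tavg ((Matrix.isUnit_iff_isUnit_det Tavg).mp hdet),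
      Matrix.one_mulVec]
  -- key zero-average fact
  have h0 : (∫ θ in Set.Icc (0 : Fin n → ℝ) 1, (ηL θ - T θ *ᵥ ξN θ)) = 0 := by
    have heq : ∀ θ, ηL θ - T θ *ᵥ ξN θ = (ηL θ - T θ *ᵥ u₁ θ) - T θ *ᵥ ξN0 := by
      intro θ
      rw [hξN θ, Matrix.mulVec_add]
      abel
    simp only [heq]
    rw [MeasureTheory.integral_sub hfint hgint, hintg, hTv, ← hv, sub_self]
  refine ⟨fun θ => ?_, fun θ => ?_, h0⟩
  · have h2 := hu₂sol θ
    rw [h0] at h2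
    rw [hξL θ, hξL (θ + ω)]
    have : u₂ θ + ξL0 + T θ *ᵥ ξN θ - (u₂ (θ + ω) + ξL0)
        = (u₂ θ - u₂ (θ + ω)) + T θ *ᵥ ξN θ := by abel
    rw [this, h2]
    abel
  · rw [hξN θ, hξN (θ + ω), ← hu₁sol θ]
    abel
end

section
/- Exactness average identity: Let F : 𝓐 → 𝓐 be an exact symplectic map on the annulus 𝓐 ⊂ 𝕋ⁿ×ℝⁿ with action form a and primitive function S (i.e. DS(z) = a(F(z))ᵀ DF(z) − a(z)ᵀ), and let K : 𝕋ⁿ → 𝓐 be an embedding with invariance error E(θ) = F(K(θ)) − K(θ+ω). Then ⟨DK(θ+ω)ᵀ Ω(K(θ+ω)) E(θ)⟩ = ⟨DE(θ)ᵀ Δa(θ) + DK(θ+ω)ᵀ Δ²a(θ)⟩, where Δa(θ) = a(F(K(θ))) − a(K(θ+ω)) = ∫₀¹ Da(K(θ+ω)+tE(θ)) E(θ) dt and Δ²a(θ) = a(F(K(θ))) − a(K(θ+ω)) − Da(K(θ+ω))E(θ) = ∫₀¹ (1−t) D²a(K(θ+ω)+tE(θ)) E(θ)^{⊗2} dt.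 In particular, the average on the left is quadratically small in E. -/
open scoped BigOperators
open Matrix MeasureTheory Set Pointwise

/-- Jacobian matrix of a map between finite-dimensional real coordinate spaces. -/
noncomputable def jacM {ι κ : Type*} [Fintype ι] [DecidableEq ι] [Fintype κ]
    (f : (ι → ℝ) → (κ → ℝ)) (x : ι → ℝ) : Matrix κ ι ℝ :=
  Matrix.of fun i j => fderiv ℝ f x (Pi.single j 1) i

section Helpers

lemma clm_apply_eq_sum {ι κ : Type*} [Fintype ι] [DecidableEq ι]
    (A : ((ι → ℝ) →L[ℝ] (κ → ℝ))) (w : ι → ℝ) (k : κ) :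
    A w k = ∑ i, w i * A (Pi.single i 1) k := by
  have hw : w = ∑ i, w i • (Pi.single i 1 : ι → ℝ) := by
    funext k
    rw [Finset.sum_apply]
    simp [Pi.single_apply, Finset.sum_ite_eq', mul_comm]
  conv_lhs => rw [hw]
  rw [map_sum]
  rw [Finset.sum_apply]
  refine Finset.sum_congr rfl fun i _ => ?_
  rw [_root_.map_smul]
  simp [smul_eq_mul]

lemma jacM_mulVec {ι κ : Type*} [Fintype ι] [DecidableEq ι] [Fintype κ]
    (f : (ι → ℝ) → (κ → ℝ)) (x : ι → ℝ) (w : ι → ℝ) :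
    jacM f x *ᵥ w = fderiv ℝ f x w := by
  funext k
  rw [clm_apply_eq_sum (fderiv ℝ f x) w k]
  simp only [jacM, Matrix.mulVec, dotProduct, Matrix.of_apply]
  exact Finset.sum_congr rfl fun i _ => mul_comm _ _

lemma jacM_trans_mulVec {ι κ : Type*} [Fintype ι] [DecidableEq ι] [Fintype κ]
    (f : (ι → ℝ) → (κ → ℝ)) (x : ι → ℝ) (u : κ → ℝ) (j : ι) :
    ((jacM f x)ᵀ *ᵥ u) j = ∑ i, u i * fderiv ℝ f x (Pi.single j 1) i := by
  simp only [jacM, Matrix.mulVec, dotProduct, Matrix.transpose_apply, Matrix.of_apply]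
  exact Finset.sum_congr rfl fun i _ => mul_comm _ _

lemma fderiv_shift {X Y : Type*} [NormedAddCommGroup X] [NormedSpace ℝ X]
    [NormedAddCommGroup Y] [NormedSpace ℝ Y] (f : X → Y) (hf : Differentiable ℝ f)
    (c x : X) : fderiv ℝ (fun y => f (y + c)) x = fderiv ℝ f (x + c) := by
  have h := ((hf (x + c)).hasFDerivAt.comp x ((hasFDerivAt_id x).add_const c))
  simpa [Function.comp_def] using h.fderiv

lemma hasFDerivAt_shift {X Y : Type*} [NormedAddCommGroup X] [NormedSpace ℝ X]
    [NormedAddCommGroup Y] [NormedSpace ℝ Y] (f : X → Y) (hf : Differentiable ℝ f)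
    (c x : X) : HasFDerivAt (fun y => f (y + c)) (fderiv ℝ f (x + c)) x := by
  have h := ((hf (x + c)).hasFDerivAt.comp x ((hasFDerivAt_id x).add_const c))
  simpa [Function.comp_def] using h

lemma continuous_jac_entry {ι κ ι' : Type*} [Fintype ι] [DecidableEq ι] [Fintype κ]
    [Fintype ι']
    {f : (ι → ℝ) → (κ → ℝ)} (hf : Continuous fun x => fderiv ℝ f x)
    {g : (ι' → ℝ) → (ι → ℝ)} (hg : Continuous g) (v : ι → ℝ) (i : κ) :
    Continuous fun x => fderiv ℝ f (g x) v i :=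
  (continuous_apply i).comp ((hf.comp hg).clm_apply continuous_const)

end Helpers

section AvgLemmas

lemma avg_shift {n : ℕ} (ψ : (Fin n → ℝ) → ℝ) (hψ : Continuous ψ)
    (hper : ∀ (θ : Fin n → ℝ) (e : Fin n → ℤ), ψ (θ + fun i => (e i : ℝ)) = ψ θ)
    (ω : Fin n → ℝ) :
    ∫ θ in Set.Icc (0 : Fin n → ℝ) 1, ψ (θ + ω) = ∫ θ in Set.Icc (0 : Fin n → ℝ) 1, ψ θ := by
  classical
  set b := Pi.basisFun ℝ (Fin n) with hb
  set L := (Submodule.span ℤ (Set.range (b : Fin n → (Fin n → ℝ)))).toAddSubgroup with hL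
  have hD : IsAddFundamentalDomain L (ZSpan.fundamentalDomain b) volume :=
    ZSpan.isAddFundamentalDomain' b volume
  haveI : VAddCommClass (Fin n → ℝ) L (Fin n → ℝ) :=
    ⟨fun a g x => by
      show a + (↑g + x) = ↑g + (a + x)
      abel⟩
  have hD' : IsAddFundamentalDomain L (ω +ᵥ ZSpan.fundamentalDomain b) volume :=
    hD.vadd_of_comm ω
  -- periodicity for lattice elements
  have hinv : ∀ (g : L) (x : Fin n → ℝ), ψ (g +ᵥ x) = ψ x := by
    rintro ⟨g, hg⟩ x
    have hmem : ∀ i, ∃ z : ℤ, (z : ℝ) = g i := by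
      intro i
      have := ((Pi.basisFun ℝ (Fin n)).mem_span_iff_repr_mem ℤ g).mp hg i
      simpa using this
    choose e he using hmem
    have hge : g = fun i => (e i : ℝ) := funext fun i => (he i).symm
    show ψ (g + x) = ψ x
    rw [add_comm, hge]
    exact hper x e
  -- Icc is a.e. equal to the fundamental domain
  have hae : ZSpan.fundamentalDomain b =ᵐ[volume] Set.Icc (0 : Fin n → ℝ) 1 := by
    rw [ZSpan.fundamentalDomain_pi_basisFun]
    have h1 : Set.Icc (0 : Fin n → ℝ) 1 = Set.pi Set.univ fun _ : Fin n => Set.Icc (0:ℝ) 1 := by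
      rw [Set.pi_univ_Icc]; rfl
    rw [h1]
    have hsub : (Set.pi Set.univ fun _ : Fin n => Set.Ico (0:ℝ) 1) ⊆
        Set.pi Set.univ fun _ : Fin n => Set.Icc (0:ℝ) 1 :=
      Set.pi_mono fun i _ => Set.Ico_subset_Icc_self
    have hmeas : MeasurableSet (Set.pi Set.univ fun _ : Fin n => Set.Ico (0:ℝ) 1) :=
      MeasurableSet.univ_pi fun _ => measurableSet_Ico
    have hm : volume (Set.pi Set.univ fun _ : Fin n => Set.Icc (0:ℝ) 1) = 1 := by
      rw [volume_pi_pi]; simp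
    have hm' : volume (Set.pi Set.univ fun _ : Fin n => Set.Ico (0:ℝ) 1) = 1 := by
      rw [volume_pi_pi]; simp
    refine MeasureTheory.ae_eq_set.mpr ⟨?_, ?_⟩
    · rw [Set.diff_eq_empty.mpr hsub]; exact measure_empty
    · rw [measure_diff hsub hmeas.nullMeasurableSet (by rw [hm']; exact ENNReal.one_ne_top),
        hm, hm']
      simp
  have hvadd_img : (fun x => ω + x) '' (ZSpan.fundamentalDomain b) = ω +ᵥ ZSpan.fundamentalDomain b := rfl
  calc ∫ θ in Set.Icc (0 : Fin n → ℝ) 1, ψ (θ + ω)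
      = ∫ θ in ZSpan.fundamentalDomain b, ψ (θ + ω) :=
        (setIntegral_congr_set hae).symm
    _ = ∫ θ in ZSpan.fundamentalDomain b, ψ (ω + θ) := by
        refine setIntegral_congr_fun ?_ ?_
        · exact (ZSpan.fundamentalDomain_measurableSet b)
        · intro x _; exact congrArg ψ (add_comm x ω)
    _ = ∫ θ in (fun x => ω + x) '' (ZSpan.fundamentalDomain b), ψ θ := by
        rw [(measurePreserving_add_left volume ω).setIntegral_image_emb
          (MeasurableEquiv.addLeft ω).measurableEmbedding ψ]
    _ = ∫ θ in ZSpan.fundamentalDomain b, ψ θ := by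
        rw [hvadd_img]
        haveI : Countable L := inferInstanceAs (Countable (Submodule.span ℤ (Set.range ⇑b)))
        exact hD'.setIntegral_eq hD hinv
    _ = ∫ θ in Set.Icc (0 : Fin n → ℝ) 1, ψ θ := setIntegral_congr_set hae

lemma avg_fderiv_zero {m : ℕ} (φ : (Fin (m+1) → ℝ) → ℝ) (hφ : ContDiff ℝ 1 φ)
    (j : Fin (m+1)) (hper : ∀ θ, φ (θ + Pi.single j 1) = φ θ) :
    ∫ θ in Set.Icc (0 : Fin (m+1) → ℝ) 1, fderiv ℝ φ θ (Pi.single j 1) = 0 := by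
  classical
  set sing : ℝ →L[ℝ] (Fin (m+1) → ℝ) :=
    ContinuousLinearMap.pi (fun i => if i = j then ContinuousLinearMap.id ℝ ℝ else 0) with hsing
  have hsing_apply : ∀ (y : ℝ), sing y = Pi.single j y := by
    intro y; funext i
    simp only [hsing, ContinuousLinearMap.pi_apply, Pi.single_apply]
    by_cases h : i = j <;> simp [h]
  set f : (Fin (m+1) → ℝ) → (Fin (m+1) → ℝ) := fun x => Pi.single j (φ x) with hf
  set f' : (Fin (m+1) → ℝ) → ((Fin (m+1) → ℝ) →L[ℝ] (Fin (m+1) → ℝ)) :=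
    fun x => sing.comp (fderiv ℝ φ x) with hf'
  have hd : ∀ x, HasFDerivAt f (f' x) x := by
    intro x
    have h1 : HasFDerivAt φ (fderiv ℝ φ x) x := (hφ.differentiable one_ne_zero x).hasFDerivAt
    have h2 := (sing.hasFDerivAt (x := φ x)).comp x h1
    have : f = fun x => sing (φ x) := by funext x; rw [hsing_apply]
    rw [this]
    exact h2
  have hdiv : ∀ x, (∑ i, f' x (Pi.single i 1) i) = fderiv ℝ φ x (Pi.single j 1) := by
    intro x
    rw [Finset.sum_eq_single j]
    · simp [hf', hsing_apply]
    · intro i _ hij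
      simp [hf', hsing_apply, Pi.single_apply, hij]
    · simp
  have hC : Continuous fun x => fderiv ℝ φ x (Pi.single j 1) := by
    exact (hφ.continuous_fderiv one_ne_zero).clm_apply continuous_const
  have Hi : IntegrableOn (fun x => ∑ i, f' x (Pi.single i 1) i)
      (Set.Icc (0 : Fin (m+1) → ℝ) 1) := by
    refine ContinuousOn.integrableOn_compact isCompact_Icc ?_
    refine Continuous.continuousOn ?_
    simpa only [funext hdiv] using hC
  have := integral_divergence_of_hasFDerivAt_off_countable
    (0 : Fin (m+1) → ℝ) 1 (by intro i; norm_num) f f' ∅ countable_empty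
    (Continuous.continuousOn (by
      refine continuous_pi fun i => ?_
      by_cases h : i = j
      · subst h; simpa [hf, Pi.single_apply] using (hφ.continuous)
      · have : (fun x => f x i) = fun _ : (Fin (m+1) → ℝ) => (0:ℝ) := by
          funext x; simp [hf, Pi.single_apply, h]
        rw [this]; exact continuous_const))
    (fun x _ => hd x) Hi
  rw [← funext hdiv]
  rw [this]
  -- now show the boundary sum vanishes
  have hins : ∀ (x : Fin m → ℝ),
      (Fin.insertNth j ((0 : Fin (m+1) → ℝ) j) x : Fin (m+1) → ℝ) + Pi.single j 1
        = (Fin.insertNth j ((1 : Fin (m+1) → ℝ) j) x : Fin (m+1) → ℝ) := by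
    intro x; funext k
    rcases eq_or_ne k j with rfl | hk
    · simp
    · obtain ⟨l, rfl⟩ := Fin.exists_succAbove_eq hk
      simp [Fin.insertNth_apply_succAbove, Pi.single_apply, (Fin.succAbove_ne j l)]
  refine Finset.sum_eq_zero ?_
  intro i _
  rcases eq_or_ne i j with rfl | hij
  · rw [sub_eq_zero]
    refine setIntegral_congr_fun (measurableSet_Icc) ?_
    intro x _
    show f (Fin.insertNth i ((1 : Fin (m+1) → ℝ) i) x) i = f (Fin.insertNth i ((0 : Fin (m+1) → ℝ) i) x) i
    simp only [hf, Pi.single_eq_same]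
    rw [← hins x, hper]
  · have hzero : ∀ (c : ℝ) (x : Fin m → ℝ), f (Fin.insertNth i c x) i = 0 := by
      intro c x; simp [hf, Pi.single_apply, hij]
    simp only [hzero]
    simp

end AvgLemmas
/-- Exactness average identity: for an exact symplectic map `F` with action form `a` and
primitive function `S`, and an approximately invariant torus `K` with error
`E(θ) = F(K(θ)) − K(θ+ω)`, the average
`⟨DK(θ+ω)ᵀ Ω(K(θ+ω)) E(θ)⟩` equals `⟨DE(θ)ᵀ Δa(θ) + DK(θ+ω)ᵀ Δ2a(θ)⟩`, where
`Ω = Daᵀ − Da`, `Δa(θ) = a(F(K(θ))) − a(K(θ+ω))` and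
`Δ2a(θ) = Δa(θ) − Da(K(θ+ω)) E(θ)`. -/
theorem exactness_average_identity
    (n : ℕ) (hn : 0 < n)
    (F : ((Fin n ⊕ Fin n) → ℝ) → ((Fin n ⊕ Fin n) → ℝ))
    (a : ((Fin n ⊕ Fin n) → ℝ) → ((Fin n ⊕ Fin n) → ℝ))
    (S : ((Fin n ⊕ Fin n) → ℝ) → ℝ)
    (hF : ContDiff ℝ 2 F) (ha : ContDiff ℝ 2 a) (hS : ContDiff ℝ 1 S)
    (hFper : ∀ (z : (Fin n ⊕ Fin n) → ℝ) (e : Fin n → ℤ),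
      F (z + Sum.elim (fun i => (e i : ℝ)) fun _ => 0) =
        F z + Sum.elim (fun i => (e i : ℝ)) fun _ => 0)
    (haper : ∀ (z : (Fin n ⊕ Fin n) → ℝ) (e : Fin n → ℤ),
      a (z + Sum.elim (fun i => (e i : ℝ)) fun _ => 0) = a z)
    (hSper : ∀ (z : (Fin n ⊕ Fin n) → ℝ) (e : Fin n → ℤ),
      S (z + Sum.elim (fun i => (e i : ℝ)) fun _ => 0) = S z)
    -- `S` is a primitive function of `F`: `DS(z) = a(F(z))ᵀ DF(z) − a(z)ᵀ`
    (hexact : ∀ (z : (Fin n ⊕ Fin n) → ℝ) (w : (Fin n ⊕ Fin n) → ℝ),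
      fderiv ℝ S z w = (∑ i, a (F z) i * fderiv ℝ F z w i) - ∑ i, a z i * w i)
    (K : (Fin n → ℝ) → ((Fin n ⊕ Fin n) → ℝ)) (hK : ContDiff ℝ 2 K)
    (hKper : ∀ (θ : Fin n → ℝ) (e : Fin n → ℤ),
      K (θ + fun i => (e i : ℝ)) = K θ + Sum.elim (fun i => (e i : ℝ)) fun _ => 0)
    (ω : Fin n → ℝ)
    (E : (Fin n → ℝ) → ((Fin n ⊕ Fin n) → ℝ)) (hE : ∀ θ, E θ = F (K θ) - K (θ + ω))
    (Δa Δ2a : (Fin n → ℝ) → ((Fin n ⊕ Fin n) → ℝ))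
    (hΔa : ∀ θ, Δa θ = a (F (K θ)) - a (K (θ + ω)))
    (hΔ2a : ∀ θ, Δ2a θ = Δa θ - jacM a (K (θ + ω)) *ᵥ E θ) :
    (∫ θ in Set.Icc (0 : Fin n → ℝ) 1,
        (jacM K (θ + ω))ᵀ *ᵥ (((jacM a (K (θ + ω)))ᵀ - jacM a (K (θ + ω))) *ᵥ E θ))
      = ∫ θ in Set.Icc (0 : Fin n → ℝ) 1,
          ((jacM E θ)ᵀ *ᵥ Δa θ + (jacM K (θ + ω))ᵀ *ᵥ Δ2a θ) := by
  classical
  obtain ⟨m, rfl⟩ : ∃ m, n = m + 1 := ⟨n - 1, by omega⟩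
  -- basic differentiability and continuity
  have hKd : Differentiable ℝ K := hK.differentiable two_ne_zero
  have hFd : Differentiable ℝ F := hF.differentiable two_ne_zero
  have had : Differentiable ℝ a := ha.differentiable two_ne_zero
  have hSd : Differentiable ℝ S := hS.differentiable one_ne_zero
  have hshiftC : Continuous fun θ : Fin (m+1) → ℝ => θ + ω :=
    continuous_id.add continuous_const
  have hshiftCD : ContDiff ℝ 2 (fun θ : Fin (m+1) → ℝ => θ + ω) :=
    contDiff_id.add contDiff_const
  have hEfun : E = fun θ => F (K θ) - K (θ + ω) := funext hE
  have hEC : ContDiff ℝ 1 E := by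
    rw [hEfun]; exact ((hF.comp hK).sub (hK.comp hshiftCD)).of_le one_le_two
  have hEd : Differentiable ℝ E := hEC.differentiable one_ne_zero
  -- derivatives
  have hKsh : ∀ θ, HasFDerivAt (fun θ => K (θ + ω)) (fderiv ℝ K (θ + ω)) θ :=
    fun θ => hasFDerivAt_shift K hKd ω θ
  have hFK : ∀ θ, HasFDerivAt (fun θ => F (K θ))
      ((fderiv ℝ F (K θ)).comp (fderiv ℝ K θ)) θ :=
    fun θ => ((hFd (K θ)).hasFDerivAt.comp θ (hKd θ).hasFDerivAt)
  have hEdf : ∀ θ, HasFDerivAt E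
      ((fderiv ℝ F (K θ)).comp (fderiv ℝ K θ) - fderiv ℝ K (θ + ω)) θ := by
    rw [hEfun]; exact fun θ => (hFK θ).sub (hKsh θ)
  have hfE : ∀ θ, fderiv ℝ E θ
      = (fderiv ℝ F (K θ)).comp (fderiv ℝ K θ) - fderiv ℝ K (θ + ω) :=
    fun θ => (hEdf θ).fderiv
  have hQdf : ∀ θ, HasFDerivAt (fun θ => S (K θ))
      ((fderiv ℝ S (K θ)).comp (fderiv ℝ K θ)) θ :=
    fun θ => ((hSd (K θ)).hasFDerivAt.comp θ (hKd θ).hasFDerivAt)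
  have haKsh : ∀ θ, HasFDerivAt (fun θ => a (K (θ + ω)))
      ((fderiv ℝ a (K (θ + ω))).comp (fderiv ℝ K (θ + ω))) θ :=
    fun θ => (had _).hasFDerivAt.comp θ (hKsh θ)
  -- the auxiliary functions
  set P : (Fin (m+1) → ℝ) → ℝ := fun θ => ∑ i, a (K (θ + ω)) i * E θ i with hP
  set Q : (Fin (m+1) → ℝ) → ℝ := fun θ => S (K θ) with hQ
  set G : (Fin (m+1) → ℝ) → (Fin (m+1)) → ℝ :=
    fun θ j => ∑ i, a (K θ) i * fderiv ℝ K θ (Pi.single j 1) i with hG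
  have hPdf : ∀ θ, HasFDerivAt P
      (∑ i, (a (K (θ + ω)) i • ((ContinuousLinearMap.proj i).comp (fderiv ℝ E θ)) +
        E θ i • ((ContinuousLinearMap.proj i).comp
          ((fderiv ℝ a (K (θ + ω))).comp (fderiv ℝ K (θ + ω)))))) θ := by
    intro θ
    refine HasFDerivAt.fun_sum fun i _ => ?_
    have hg : HasFDerivAt (fun θ => a (K (θ + ω)) i)
        ((ContinuousLinearMap.proj i).comp
          ((fderiv ℝ a (K (θ + ω))).comp (fderiv ℝ K (θ + ω)))) θ :=
      (ContinuousLinearMap.proj (R := ℝ) (φ := fun _ : Fin (m+1) ⊕ Fin (m+1) => ℝ)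
        i).hasFDerivAt.comp θ (haKsh θ)
    have hh : HasFDerivAt (fun θ => E θ i)
        ((ContinuousLinearMap.proj i).comp (fderiv ℝ E θ)) θ :=
      (ContinuousLinearMap.proj (R := ℝ) (φ := fun _ : Fin (m+1) ⊕ Fin (m+1) => ℝ)
        i).hasFDerivAt.comp θ (hEd θ).hasFDerivAt
    exact hg.mul hh
  -- smoothness of P, Q
  have hPC : ContDiff ℝ 1 P := by
    refine ContDiff.sum fun i _ => ContDiff.mul ?_ ?_
    · exact (contDiff_pi.mp ((ha.comp (hK.comp hshiftCD)).of_le one_le_two)) i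
    · exact (contDiff_pi.mp hEC) i
  have hQC : ContDiff ℝ 1 Q := (hS.comp (hK.of_le one_le_two) : _)
  have hPQC : ContDiff ℝ 1 (fun θ => P θ - Q θ) := hPC.sub hQC
  -- periodicity facts
  have hKjacper : ∀ (θ : Fin (m+1) → ℝ) (e : Fin (m+1) → ℤ),
      fderiv ℝ K (θ + fun i => (e i : ℝ)) = fderiv ℝ K θ := by
    intro θ e
    rw [← fderiv_shift K hKd _ θ]
    have h1 : (fun y => K (y + fun i => (e i : ℝ)))
        = fun y => K y + Sum.elim (fun i => ((e i : ℝ))) (fun _ => 0) :=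
      funext fun y => hKper y e
    rw [h1, fderiv_add_const]
  have hcomm : ∀ (θ : Fin (m+1) → ℝ) (e : Fin (m+1) → ℤ),
      (θ + fun i => (e i : ℝ)) + ω = (θ + ω) + fun i => (e i : ℝ) := by
    intro θ e; funext i; simp; ring
  have hEper : ∀ (θ : Fin (m+1) → ℝ) (e : Fin (m+1) → ℤ),
      E (θ + fun i => (e i : ℝ)) = E θ := by
    intro θ e
    rw [hE, hE, hKper θ e, hFper, hcomm, hKper (θ + ω) e]
    abel
  have hPper : ∀ (θ : Fin (m+1) → ℝ) (e : Fin (m+1) → ℤ),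
      P (θ + fun i => (e i : ℝ)) = P θ := by
    intro θ e
    simp only [hP]
    rw [hcomm, hKper (θ + ω) e, haper, hEper]
  have hQper : ∀ (θ : Fin (m+1) → ℝ) (e : Fin (m+1) → ℤ),
      Q (θ + fun i => (e i : ℝ)) = Q θ := by
    intro θ e
    simp only [hQ]
    rw [hKper θ e, hSper]
  have hGper : ∀ (j : Fin (m+1)) (θ : Fin (m+1) → ℝ) (e : Fin (m+1) → ℤ),
      G (θ + fun i => (e i : ℝ)) j = G θ j := by
    intro j θ e
    simp only [hG]
    rw [hKper θ e, haper, hKjacper θ e]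
  -- abbreviations for the two integrands
  set LHSf : (Fin (m+1) → ℝ) → (Fin (m+1) → ℝ) := fun θ =>
    (jacM K (θ + ω))ᵀ *ᵥ (((jacM a (K (θ + ω)))ᵀ - jacM a (K (θ + ω))) *ᵥ E θ) with hLHSf
  set RHSf : (Fin (m+1) → ℝ) → (Fin (m+1) → ℝ) := fun θ =>
    (jacM E θ)ᵀ *ᵥ Δa θ + (jacM K (θ + ω))ᵀ *ᵥ Δ2a θ with hRHSf
  -- component formulas
  have hLj : ∀ (θ : Fin (m+1) → ℝ) (j : Fin (m+1)), LHSf θ j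
      = ∑ i, ((∑ k, E θ k * fderiv ℝ a (K (θ + ω)) (Pi.single i 1) k)
          - fderiv ℝ a (K (θ + ω)) (E θ) i) * fderiv ℝ K (θ + ω) (Pi.single j 1) i := by
    intro θ j
    show ((jacM K (θ + ω))ᵀ *ᵥ (((jacM a (K (θ + ω)))ᵀ - jacM a (K (θ + ω))) *ᵥ E θ)) j = _
    rw [jacM_trans_mulVec]
    refine Finset.sum_congr rfl fun i _ => ?_
    congr 1
    rw [Matrix.sub_mulVec, Pi.sub_apply, jacM_mulVec]
    congr 1
    exact jacM_trans_mulVec a (K (θ + ω)) (E θ) i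
  have hRj0 : ∀ (θ : Fin (m+1) → ℝ) (j : Fin (m+1)), RHSf θ j
      = (∑ i, Δa θ i * fderiv ℝ E θ (Pi.single j 1) i)
        + ∑ i, Δ2a θ i * fderiv ℝ K (θ + ω) (Pi.single j 1) i := by
    intro θ j
    show ((jacM E θ)ᵀ *ᵥ Δa θ + (jacM K (θ + ω))ᵀ *ᵥ Δ2a θ) j = _
    rw [Pi.add_apply, jacM_trans_mulVec, jacM_trans_mulVec]
  -- continuity facts
  have hcK : Continuous fun x => fderiv ℝ K x := hK.continuous_fderiv two_ne_zero
  have hcF : Continuous fun z => fderiv ℝ F z := hF.continuous_fderiv two_ne_zero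
  have hca : Continuous fun z => fderiv ℝ a z := ha.continuous_fderiv two_ne_zero
  have hcE : Continuous fun θ => fderiv ℝ E θ := hEC.continuous_fderiv one_ne_zero
  have hcEf : Continuous E := hEC.continuous
  have hcKsh : Continuous fun θ : Fin (m+1) → ℝ => K (θ + ω) := hK.continuous.comp hshiftC
  have hcΔa : Continuous Δa := by
    rw [funext hΔa]
    exact ((ha.continuous).comp ((hF.continuous).comp hK.continuous)).sub
      ((ha.continuous).comp hcKsh)
  have hcΔ2a : Continuous Δ2a := by
    rw [funext hΔ2a]
    refine hcΔa.sub ?_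
    have h2 : (fun θ : Fin (m+1) → ℝ => jacM a (K (θ + ω)) *ᵥ E θ)
        = fun θ => fderiv ℝ a (K (θ + ω)) (E θ) := funext fun θ => jacM_mulVec _ _ _
    rw [h2]
    exact ((hca.comp hcKsh).clm_apply hcEf)
  have hcLj : ∀ j, Continuous fun θ => LHSf θ j := by
    intro j
    have h : (fun θ => LHSf θ j) = fun θ =>
        ∑ i, ((∑ k, E θ k * fderiv ℝ a (K (θ + ω)) (Pi.single i 1) k)
          - fderiv ℝ a (K (θ + ω)) (E θ) i) * fderiv ℝ K (θ + ω) (Pi.single j 1) i :=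
      funext fun θ => hLj θ j
    rw [h]
    refine continuous_finset_sum _ fun i _ => Continuous.mul (Continuous.sub ?_ ?_) ?_
    · exact continuous_finset_sum _ fun k _ =>
        ((continuous_apply k).comp hcEf).mul (continuous_jac_entry hca hcKsh _ _)
    · exact (continuous_apply i).comp ((hca.comp hcKsh).clm_apply hcEf)
    · exact continuous_jac_entry hcK hshiftC _ _
  have hcRj : ∀ j, Continuous fun θ => RHSf θ j := by
    intro j
    have h : (fun θ => RHSf θ j) = fun θ =>
        (∑ i, Δa θ i * fderiv ℝ E θ (Pi.single j 1) i)
          + ∑ i, Δ2a θ i * fderiv ℝ K (θ + ω) (Pi.single j 1) i :=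
      funext fun θ => hRj0 θ j
    rw [h]
    refine Continuous.add ?_ ?_
    · exact continuous_finset_sum _ fun i _ =>
        ((continuous_apply i).comp hcΔa).mul (continuous_jac_entry hcE continuous_id _ _)
    · exact continuous_finset_sum _ fun i _ =>
        ((continuous_apply i).comp hcΔ2a).mul (continuous_jac_entry hcK hshiftC _ _)
  have hcG : ∀ j, Continuous fun θ => G θ j := by
    intro j
    exact continuous_finset_sum _ fun i _ =>
      ((continuous_apply i).comp ((ha.continuous).comp hK.continuous)).mul
        (continuous_jac_entry hcK continuous_id _ _)
  -- the pointwise key identity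
  have key : ∀ (θ : Fin (m+1) → ℝ) (j : Fin (m+1)), LHSf θ j
      = RHSf θ j + fderiv ℝ (fun θ => P θ - Q θ) θ (Pi.single j 1)
        + (G (θ + ω) j - G θ j) := by
    intro θ j
    have hPv : fderiv ℝ P θ (Pi.single j 1)
        = ∑ i, (a (K (θ + ω)) i * fderiv ℝ E θ (Pi.single j 1) i
            + E θ i * fderiv ℝ a (K (θ + ω)) (fderiv ℝ K (θ + ω) (Pi.single j 1)) i) := by
      rw [(hPdf θ).fderiv]
      simp [ContinuousLinearMap.sum_apply, ContinuousLinearMap.add_apply,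
        ContinuousLinearMap.smul_apply, ContinuousLinearMap.comp_apply,
        ContinuousLinearMap.proj_apply, smul_eq_mul]
    have hQv : fderiv ℝ Q θ (Pi.single j 1)
        = (∑ i, a (F (K θ)) i * fderiv ℝ F (K θ) (fderiv ℝ K θ (Pi.single j 1)) i)
          - ∑ i, a (K θ) i * fderiv ℝ K θ (Pi.single j 1) i := by
      rw [(hQdf θ).fderiv, ContinuousLinearMap.comp_apply,
        hexact (K θ) (fderiv ℝ K θ (Pi.single j 1))]
    have hPQv : fderiv ℝ (fun θ => P θ - Q θ) θ (Pi.single j 1)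
        = fderiv ℝ P θ (Pi.single j 1) - fderiv ℝ Q θ (Pi.single j 1) := by
      rw [fderiv_fun_sub (hPC.differentiable one_ne_zero θ) (hQC.differentiable one_ne_zero θ)]
      rfl
    have hEv : ∀ i, fderiv ℝ E θ (Pi.single j 1) i
        = fderiv ℝ F (K θ) (fderiv ℝ K θ (Pi.single j 1)) i
          - fderiv ℝ K (θ + ω) (Pi.single j 1) i := by
      intro i
      rw [hfE θ]
      simp
    have hswap : ∑ i, (∑ k, E θ k * fderiv ℝ a (K (θ + ω)) (Pi.single i 1) k)
          * fderiv ℝ K (θ + ω) (Pi.single j 1) i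
        = ∑ k, E θ k * fderiv ℝ a (K (θ + ω)) (fderiv ℝ K (θ + ω) (Pi.single j 1)) k := by
      calc ∑ i, (∑ k, E θ k * fderiv ℝ a (K (θ + ω)) (Pi.single i 1) k)
            * fderiv ℝ K (θ + ω) (Pi.single j 1) i
          = ∑ i, ∑ k, E θ k * fderiv ℝ a (K (θ + ω)) (Pi.single i 1) k
            * fderiv ℝ K (θ + ω) (Pi.single j 1) i := by
            refine Finset.sum_congr rfl fun i _ => ?_
            rw [Finset.sum_mul]
        _ = ∑ k, ∑ i, E θ k * fderiv ℝ a (K (θ + ω)) (Pi.single i 1) k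
            * fderiv ℝ K (θ + ω) (Pi.single j 1) i := Finset.sum_comm
        _ = ∑ k, E θ k * ∑ i, fderiv ℝ K (θ + ω) (Pi.single j 1) i
            * fderiv ℝ a (K (θ + ω)) (Pi.single i 1) k := by
            refine Finset.sum_congr rfl fun k _ => ?_
            rw [Finset.mul_sum]
            exact Finset.sum_congr rfl fun i _ => by ring
        _ = ∑ k, E θ k * fderiv ℝ a (K (θ + ω)) (fderiv ℝ K (θ + ω) (Pi.single j 1)) k := by
            refine Finset.sum_congr rfl fun k _ => ?_
            rw [← clm_apply_eq_sum]
    rw [hLj θ j, hRj0 θ j, hPQv, hPv, hQv]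
    simp only [hΔ2a, hΔa, Pi.sub_apply, jacM_mulVec, hG, hEv]
    simp only [sub_mul, Finset.sum_sub_distrib]
    rw [hswap]
    simp only [← Finset.sum_add_distrib, ← Finset.sum_sub_distrib]
    refine Finset.sum_congr rfl fun i _ => ?_
    ring
  -- integrability
  have hIntL : IntegrableOn LHSf (Set.Icc (0 : Fin (m+1) → ℝ) 1) volume :=
    (continuous_pi hcLj).integrableOn_Icc
  have hIntR : IntegrableOn RHSf (Set.Icc (0 : Fin (m+1) → ℝ) 1) volume :=
    (continuous_pi hcRj).integrableOn_Icc
  -- componentwise equality of the averages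
  have hcomp : ∀ j : Fin (m+1), ∫ θ in Set.Icc (0 : Fin (m+1) → ℝ) 1, LHSf θ j
      = ∫ θ in Set.Icc (0 : Fin (m+1) → ℝ) 1, RHSf θ j := by
    intro j
    have hint1 : IntegrableOn (fun θ => RHSf θ j) (Set.Icc (0 : Fin (m+1) → ℝ) 1) volume :=
      (hcRj j).integrableOn_Icc
    have hint2 : IntegrableOn (fun θ => fderiv ℝ (fun θ => P θ - Q θ) θ (Pi.single j 1))
        (Set.Icc (0 : Fin (m+1) → ℝ) 1) volume :=
      ((hPQC.continuous_fderiv one_ne_zero).clm_apply continuous_const).integrableOn_Icc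
    have hint3 : IntegrableOn (fun θ => G (θ + ω) j - G θ j)
        (Set.Icc (0 : Fin (m+1) → ℝ) 1) volume :=
      (((hcG j).comp hshiftC).sub (hcG j)).integrableOn_Icc
    have h0 : (fun θ => LHSf θ j) = fun θ =>
        (RHSf θ j + fderiv ℝ (fun θ => P θ - Q θ) θ (Pi.single j 1))
          + (G (θ + ω) j - G θ j) := funext fun θ => key θ j
    have hint12 : IntegrableOn (fun θ => RHSf θ j
        + fderiv ℝ (fun θ => P θ - Q θ) θ (Pi.single j 1))
        (Set.Icc (0 : Fin (m+1) → ℝ) 1) volume := hint1.add hint2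
    rw [h0, integral_add hint12 hint3, integral_add hint1 hint2]
    have hz1 : ∫ θ in Set.Icc (0 : Fin (m+1) → ℝ) 1,
        fderiv ℝ (fun θ => P θ - Q θ) θ (Pi.single j 1) = 0 := by
      refine avg_fderiv_zero _ hPQC j ?_
      intro θ
      have hsingle : (fun i => ((Pi.single j (1:ℤ) : Fin (m+1) → ℤ) i : ℝ))
          = Pi.single j 1 := by
        funext i; by_cases h : i = j <;> simp [Pi.single_apply, h]
      have h1 := hPper θ (Pi.single j (1:ℤ))
      have h2 := hQper θ (Pi.single j (1:ℤ))
      rw [hsingle] at h1 h2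
      show P (θ + Pi.single j 1) - Q (θ + Pi.single j 1) = P θ - Q θ
      rw [h1, h2]
    have hz2 : ∫ θ in Set.Icc (0 : Fin (m+1) → ℝ) 1, (G (θ + ω) j - G θ j) = 0 := by
      have hintG1 : IntegrableOn (fun θ => G (θ + ω) j)
          (Set.Icc (0 : Fin (m+1) → ℝ) 1) volume :=
        (((hcG j).comp hshiftC).integrableOn_Icc : _)
      have hintG2 : IntegrableOn (fun θ => G θ j)
          (Set.Icc (0 : Fin (m+1) → ℝ) 1) volume := (hcG j).integrableOn_Icc
      rw [integral_sub hintG1 hintG2]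
      rw [avg_shift (fun θ => G θ j) (hcG j) (hGper j) ω]
      exact sub_self _
    rw [hz1, hz2]
    simp
  -- assemble
  funext j
  have h1 : (∫ θ in Set.Icc (0 : Fin (m+1) → ℝ) 1, LHSf θ) j
      = ∫ θ in Set.Icc (0 : Fin (m+1) → ℝ) 1, LHSf θ j :=
    ((ContinuousLinearMap.proj (R := ℝ) (φ := fun _ : Fin (m+1) => ℝ)
      j).integral_comp_comm hIntL).symm
  have h2 : (∫ θ in Set.Icc (0 : Fin (m+1) → ℝ) 1, RHSf θ) j
      = ∫ θ in Set.Icc (0 : Fin (m+1) → ℝ) 1, RHSf θ j :=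
    ((ContinuousLinearMap.proj (R := ℝ) (φ := fun _ : Fin (m+1) => ℝ)
      j).integral_comp_comm hIntR).symm
  rw [h1, h2]
  exact hcomp j
end
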